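/- arXiv:1502.04282 — 3 statements merged into one kernel-verified Lean document; each statement's English description precedes it below -/
import Mathlib

section
/- For every b ∈ ℕ there exist complex constants c₀, …, c_b with c_b ≠ 0, and polynomials q_{r,s} ∈ ℂ[X,Y] for 0 ≤ r, s ≤ b, such that for every open set U ⊆ ℂ, every C^∞-smooth function f : U → ℂ, and every w ∈ U: (T_w^b f)(w) = Σ_{j=0}^b c_j · w̄^j · (∂^j f/∂w̄^j)(w) + Σ_{0≤r,s≤b} q_{r,s}(w, w̄) · (∂^{r+s+1} f/∂w^{r+1}∂w̄^s)(w). In particular, if ∂f/∂w = 0 on U (f is anti-holomorphic on U), then (T_w^b f)(w) = Σ_{j=0}^b c_j w̄^j (∂^j f/∂w̄^j)(w) on U. -/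
open Complex ComplexConjugate

noncomputable section

/-- The Wirtinger derivative `∂/∂w = (∂_x - i∂_y)/2`. -/
def wd (f : ℂ → ℂ) : ℂ → ℂ := fun w =>
  (1/2) * (fderiv ℝ f w 1 - Complex.I * fderiv ℝ f w Complex.I)

/-- The Wirtinger derivative `∂/∂w̄ = (∂_x + i∂_y)/2`. -/
def wdb (f : ℂ → ℂ) : ℂ → ℂ := fun w =>
  (1/2) * (fderiv ℝ f w 1 + Complex.I * fderiv ℝ f w Complex.I)

/-- The tangential operator `T_w = (1/(2i))(w ∂/∂w - w̄ ∂/∂w̄)`. -/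
def Tang (f : ℂ → ℂ) : ℂ → ℂ := fun w =>
  (2 * Complex.I)⁻¹ * (w * wd f w - conj w * wdb f w)

section Lemmas

open MvPolynomial

variable {U : Set ℂ} {f g : ℂ → ℂ} {w : ℂ}

lemma sm_diffAt {F : Type*} [NormedAddCommGroup F] [NormedSpace ℝ F] {g : ℂ → F}
    (hU : IsOpen U) (hf : ContDiffOn ℝ (⊤:ℕ∞) g U) (hw : w ∈ U) :
    DifferentiableAt ℝ g w :=
  ((hf.differentiableOn (by simp)).differentiableAt (hU.mem_nhds hw))

lemma fderiv_contDiffOn (hU : IsOpen U) (hf : ContDiffOn ℝ (⊤:ℕ∞) f U) :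
    ContDiffOn ℝ (⊤:ℕ∞) (fderiv ℝ f) U :=
  hf.fderiv_of_isOpen hU (m := (⊤:ℕ∞)) (by simp)

lemma sm_fderiv_apply (hU : IsOpen U) (hf : ContDiffOn ℝ (⊤:ℕ∞) f U) (v : ℂ) :
    ContDiffOn ℝ (⊤:ℕ∞) (fun x => fderiv ℝ f x v) U := by
  exact (fderiv_contDiffOn hU hf).clm_apply contDiffOn_const

lemma wd_contDiffOn (hU : IsOpen U) (hf : ContDiffOn ℝ (⊤:ℕ∞) f U) :
    ContDiffOn ℝ (⊤:ℕ∞) (wd f) U := by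
  unfold wd
  exact (contDiffOn_const.mul (((sm_fderiv_apply hU hf 1)).sub
    (contDiffOn_const.mul (sm_fderiv_apply hU hf Complex.I))))

lemma wdb_contDiffOn (hU : IsOpen U) (hf : ContDiffOn ℝ (⊤:ℕ∞) f U) :
    ContDiffOn ℝ (⊤:ℕ∞) (wdb f) U := by
  unfold wdb
  exact (contDiffOn_const.mul (((sm_fderiv_apply hU hf 1)).add
    (contDiffOn_const.mul (sm_fderiv_apply hU hf Complex.I))))

lemma wd_iter_contDiffOn (hU : IsOpen U) (hf : ContDiffOn ℝ (⊤:ℕ∞) f U) (n : ℕ) :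
    ContDiffOn ℝ (⊤:ℕ∞) (wd^[n] f) U := by
  induction n generalizing f with
  | zero => simpa using hf
  | succ n ih => rw [Function.iterate_succ_apply]; exact ih (wd_contDiffOn hU hf)

lemma wdb_iter_contDiffOn (hU : IsOpen U) (hf : ContDiffOn ℝ (⊤:ℕ∞) f U) (n : ℕ) :
    ContDiffOn ℝ (⊤:ℕ∞) (wdb^[n] f) U := by
  induction n generalizing f with
  | zero => simpa using hf
  | succ n ih => rw [Function.iterate_succ_apply]; exact ih (wdb_contDiffOn hU hf)

lemma wd_congr (h : f =ᶠ[nhds w] g) : wd f w = wd g w := by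
  unfold wd; rw [h.fderiv_eq]

lemma wdb_congr (h : f =ᶠ[nhds w] g) : wdb f w = wdb g w := by
  unfold wdb; rw [h.fderiv_eq]

lemma wd_congrOn (hU : IsOpen U) (h : ∀ x ∈ U, f x = g x) (hw : w ∈ U) :
    wd f w = wd g w :=
  wd_congr (Filter.eventuallyEq_of_mem (hU.mem_nhds hw) h)

lemma wdb_congrOn (hU : IsOpen U) (h : ∀ x ∈ U, f x = g x) (hw : w ∈ U) :
    wdb f w = wdb g w :=
  wdb_congr (Filter.eventuallyEq_of_mem (hU.mem_nhds hw) h)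

lemma wd_iter_congrOn (hU : IsOpen U) (h : ∀ x ∈ U, f x = g x) (n : ℕ) (hw : w ∈ U) :
    wd^[n] f w = wd^[n] g w := by
  induction n generalizing f g w with
  | zero => simpa using h w hw
  | succ n ih =>
    rw [Function.iterate_succ_apply, Function.iterate_succ_apply]
    exact ih (fun x hx => wd_congrOn hU h hx) hw

lemma wdb_iter_congrOn (hU : IsOpen U) (h : ∀ x ∈ U, f x = g x) (n : ℕ) (hw : w ∈ U) :
    wdb^[n] f w = wdb^[n] g w := by
  induction n generalizing f g w with
  | zero => simpa using h w hw
  | succ n ih =>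
    rw [Function.iterate_succ_apply, Function.iterate_succ_apply]
    exact ih (fun x hx => wdb_congrOn hU h hx) hw

lemma wd_zero_fun : wd (fun _ => (0:ℂ)) = fun _ => 0 := by
  funext x; unfold wd; rw [fderiv_fun_const]; simp

lemma wd_iter_zero (n : ℕ) : wd^[n] (fun _ => (0:ℂ)) = fun _ => 0 := by
  induction n with
  | zero => rfl
  | succ n ih => rw [Function.iterate_succ_apply, wd_zero_fun, ih]

lemma wdb_zero_fun : wdb (fun _ => (0:ℂ)) = fun _ => 0 := by
  funext x; unfold wdb; rw [fderiv_fun_const]; simp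

lemma wdb_iter_zero (n : ℕ) : wdb^[n] (fun _ => (0:ℂ)) = fun _ => 0 := by
  induction n with
  | zero => rfl
  | succ n ih => rw [Function.iterate_succ_apply, wdb_zero_fun, ih]

lemma wd_iter_eq_zero_on (hU : IsOpen U) (h : ∀ x ∈ U, f x = 0) (n : ℕ) (hw : w ∈ U) :
    wd^[n] f w = 0 := by
  have := wd_iter_congrOn (g := fun _ => 0) hU h n hw
  rw [this, wd_iter_zero]

lemma wd_add (hf : DifferentiableAt ℝ f w) (hg : DifferentiableAt ℝ g w) :
    wd (fun x => f x + g x) w = wd f w + wd g w := by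
  unfold wd; rw [fderiv_fun_add hf hg]; simp; ring

lemma wdb_add (hf : DifferentiableAt ℝ f w) (hg : DifferentiableAt ℝ g w) :
    wdb (fun x => f x + g x) w = wdb f w + wdb g w := by
  unfold wdb; rw [fderiv_fun_add hf hg]; simp; ring

lemma wd_sum {ι : Type*} (s : Finset ι) (F : ι → ℂ → ℂ)
    (h : ∀ i ∈ s, DifferentiableAt ℝ (F i) w) :
    wd (fun x => ∑ i ∈ s, F i x) w = ∑ i ∈ s, wd (F i) w := by
  unfold wd; rw [fderiv_fun_sum h]
  simp only [ContinuousLinearMap.coe_sum', Finset.sum_apply, Finset.mul_sum]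
  rw [← Finset.sum_sub_distrib]
  rw [Finset.mul_sum]

lemma wdb_sum {ι : Type*} (s : Finset ι) (F : ι → ℂ → ℂ)
    (h : ∀ i ∈ s, DifferentiableAt ℝ (F i) w) :
    wdb (fun x => ∑ i ∈ s, F i x) w = ∑ i ∈ s, wdb (F i) w := by
  unfold wdb; rw [fderiv_fun_sum h]
  simp only [ContinuousLinearMap.coe_sum', Finset.sum_apply, Finset.mul_sum]
  rw [← Finset.sum_add_distrib]
  rw [Finset.mul_sum]

lemma wd_mul (hf : DifferentiableAt ℝ f w) (hg : DifferentiableAt ℝ g w) :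
    wd (fun x => f x * g x) w = wd f w * g w + f w * wd g w := by
  unfold wd; rw [fderiv_fun_mul hf hg]; simp; ring

lemma wdb_mul (hf : DifferentiableAt ℝ f w) (hg : DifferentiableAt ℝ g w) :
    wdb (fun x => f x * g x) w = wdb f w * g w + f w * wdb g w := by
  unfold wdb; rw [fderiv_fun_mul hf hg]; simp; ring

lemma wd_id : wd (fun x => x) w = 1 := by
  unfold wd; rw [fderiv_id']; simp [Complex.I_mul_I]; ring

lemma wdb_id : wdb (fun x => x) w = 0 := by
  unfold wdb; rw [fderiv_id']; simp [Complex.I_mul_I]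

lemma fderiv_conj (w : ℂ) : fderiv ℝ (fun x : ℂ => (conj x : ℂ)) w =
    Complex.conjCLE.toContinuousLinearMap := by
  exact (Complex.conjCLE.toContinuousLinearMap.hasFDerivAt (x := w)).fderiv

lemma wd_conj : wd (fun x => (conj x : ℂ)) w = 0 := by
  unfold wd; rw [fderiv_conj]; simp [Complex.conjCLE]

lemma wdb_conj : wdb (fun x => (conj x : ℂ)) w = 1 := by
  unfold wdb; rw [fderiv_conj]; simp [Complex.conjCLE]; ring

lemma wd_const {c : ℂ} : wd (fun _ => c) w = 0 := by
  unfold wd; rw [fderiv_fun_const]; simp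

lemma wdb_const {c : ℂ} : wdb (fun _ => c) w = 0 := by
  unfold wdb; rw [fderiv_fun_const]; simp

lemma diff_conj_pow (j : ℕ) : Differentiable ℝ (fun x : ℂ => (conj x : ℂ) ^ j) :=
  fun _ => (Complex.conjCLE.differentiable _).pow j

lemma wd_conj_pow (j : ℕ) : wd (fun x => (conj x : ℂ) ^ j) w = 0 := by
  induction j with
  | zero => simpa using wd_const
  | succ j ih =>
    have h := wd_mul (f := fun x => (conj x : ℂ)) (g := fun x => (conj x : ℂ) ^ j)
      (w := w) (Complex.conjCLE.differentiable _) (diff_conj_pow j _)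
    have e : (fun x : ℂ => (conj x : ℂ) ^ (j+1)) = fun x => (conj x : ℂ) * (conj x : ℂ) ^ j := by
      funext x; ring
    rw [e]
    simpa [wd_conj, ih] using h

lemma wdb_conj_pow (j : ℕ) : wdb (fun x => (conj x : ℂ) ^ j) w = j * (conj w) ^ (j-1) := by
  induction j with
  | zero => simpa using wdb_const
  | succ j ih =>
    have h := wdb_mul (f := fun x => (conj x : ℂ)) (g := fun x => (conj x : ℂ) ^ j)
      (w := w) (Complex.conjCLE.differentiable _) (diff_conj_pow j _)
    have e : (fun x : ℂ => (conj x : ℂ) ^ (j+1)) = fun x => (conj x : ℂ) * (conj x : ℂ) ^ j := by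
      funext x; ring
    rw [e]
    rw [wdb_conj, ih] at h
    rw [h]
    rcases j with _ | k
    · simp
    · simp only [Nat.add_sub_cancel]
      push_cast
      ring

lemma wd_const_mul (a : ℂ) {h : ℂ → ℂ} (hh : DifferentiableAt ℝ h w) :
    wd (fun x => a * h x) w = a * wd h w := by
  have := wd_mul (f := fun _ => a) (g := h) (w := w) (differentiableAt_const a) hh
  simpa [wd_const] using this

lemma wdb_const_mul (a : ℂ) {h : ℂ → ℂ} (hh : DifferentiableAt ℝ h w) :
    wdb (fun x => a * h x) w = a * wdb h w := by
  have := wdb_mul (f := fun _ => a) (g := h) (w := w) (differentiableAt_const a) hh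
  simpa [wdb_const] using this

/-! ### Polynomial functions -/

def polyf (p : MvPolynomial (Fin 2) ℂ) : ℂ → ℂ := fun x => MvPolynomial.eval ![x, conj x] p

lemma polyf_C (c : ℂ) : polyf (C c) = fun _ => c := by funext x; simp [polyf]
lemma polyf_add (p q : MvPolynomial (Fin 2) ℂ) :
    polyf (p + q) = fun x => polyf p x + polyf q x := by funext x; simp [polyf]
lemma polyf_mul (p q : MvPolynomial (Fin 2) ℂ) :
    polyf (p * q) = fun x => polyf p x * polyf q x := by funext x; simp [polyf]
lemma polyf_X0 : polyf (X 0) = fun x => x := by funext x; simp [polyf]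
lemma polyf_X1 : polyf (X 1) = fun x => (conj x : ℂ) := by funext x; simp [polyf]

lemma polyf_differentiable (p : MvPolynomial (Fin 2) ℂ) : Differentiable ℝ (polyf p) := by
  induction p using MvPolynomial.induction_on with
  | C c => rw [polyf_C]; exact differentiable_const c
  | add p q hp hq => rw [polyf_add]; exact hp.add hq
  | mul_X p i hp =>
    rw [polyf_mul]
    refine hp.mul ?_
    fin_cases i
    · rw [show polyf (X ((⟨0, by omega⟩ : Fin 2))) = fun x => x from polyf_X0]
      exact differentiable_fun_id
    · rw [show polyf (X ((⟨1, by omega⟩ : Fin 2))) = fun x => (conj x : ℂ) from polyf_X1]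
      exact Complex.conjCLE.differentiable

lemma wd_polyf_X (i : Fin 2) (w : ℂ) :
    wd (polyf (X i)) w = polyf (pderiv 0 (X i)) w := by
  fin_cases i
  · rw [show polyf (X ((⟨0, by omega⟩ : Fin 2))) = fun x => x from polyf_X0, wd_id]
    simp [polyf, pderiv_X]
  · rw [show polyf (X ((⟨1, by omega⟩ : Fin 2))) = fun x => (conj x : ℂ) from polyf_X1, wd_conj]
    simp [polyf, pderiv_X]

lemma wdb_polyf_X (i : Fin 2) (w : ℂ) :
    wdb (polyf (X i)) w = polyf (pderiv 1 (X i)) w := by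
  fin_cases i
  · rw [show polyf (X ((⟨0, by omega⟩ : Fin 2))) = fun x => x from polyf_X0, wdb_id]
    simp [polyf, pderiv_X]
  · rw [show polyf (X ((⟨1, by omega⟩ : Fin 2))) = fun x => (conj x : ℂ) from polyf_X1, wdb_conj]
    simp [polyf, pderiv_X]

lemma wd_polyf (p : MvPolynomial (Fin 2) ℂ) (w : ℂ) :
    wd (polyf p) w = polyf (pderiv 0 p) w := by
  induction p using MvPolynomial.induction_on with
  | C c => rw [polyf_C, wd_const]; simp [polyf]
  | add p q hp hq =>
    rw [polyf_add, wd_add ((polyf_differentiable p) w) ((polyf_differentiable q) w), hp, hq,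
      map_add, polyf_add]
  | mul_X p i hp =>
    rw [polyf_mul, wd_mul ((polyf_differentiable p) w) ((polyf_differentiable (X i)) w), hp,
      wd_polyf_X, pderiv_mul, polyf_add, polyf_mul, polyf_mul]

lemma wdb_polyf (p : MvPolynomial (Fin 2) ℂ) (w : ℂ) :
    wdb (polyf p) w = polyf (pderiv 1 p) w := by
  induction p using MvPolynomial.induction_on with
  | C c => rw [polyf_C, wdb_const]; simp [polyf]
  | add p q hp hq =>
    rw [polyf_add, wdb_add ((polyf_differentiable p) w) ((polyf_differentiable q) w), hp, hq,
      map_add, polyf_add]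
  | mul_X p i hp =>
    rw [polyf_mul, wdb_mul ((polyf_differentiable p) w) ((polyf_differentiable (X i)) w), hp,
      wdb_polyf_X, pderiv_mul, polyf_add, polyf_mul, polyf_mul]

/-! ### Clairaut and commutation -/

lemma fderiv2_apply (hU : IsOpen U) (hf : ContDiffOn ℝ (⊤:ℕ∞) f U) (hw : w ∈ U) (v u : ℂ) :
    fderiv ℝ (fun x => fderiv ℝ f x v) w u = fderiv ℝ (fderiv ℝ f) w u v := by
  have hc : DifferentiableAt ℝ (fderiv ℝ f) w :=
    sm_diffAt hU (fderiv_contDiffOn hU hf) hw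
  rw [fderiv_clm_apply hc (differentiableAt_const v)]
  simp

lemma clairaut (hU : IsOpen U) (hf : ContDiffOn ℝ (⊤:ℕ∞) f U) (hw : w ∈ U) :
    wd (wdb f) w = wdb (wd f) w := by
  have hD1 : DifferentiableAt ℝ (fun x => fderiv ℝ f x 1) w :=
    sm_diffAt hU (sm_fderiv_apply hU hf 1) hw
  have hDI : DifferentiableAt ℝ (fun x => fderiv ℝ f x Complex.I) w :=
    sm_diffAt hU (sm_fderiv_apply hU hf Complex.I) hw
  have hsym : ∀ u v : ℂ, fderiv ℝ (fderiv ℝ f) w u v = fderiv ℝ (fderiv ℝ f) w v u := by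
    have := (hf.contDiffAt (hU.mem_nhds hw)).isSymmSndFDerivAt
      (n := ((⊤:ℕ∞) : WithTop ℕ∞)) (by
        rw [minSmoothness_of_isRCLikeNormedField, show ((2:WithTop ℕ∞)) = ((2:ℕ∞) : WithTop ℕ∞) by rfl]
        exact WithTop.coe_le_coe.mpr le_top)
    exact this
  have key : ∀ (a : ℂ) (u : ℂ),
      fderiv ℝ (fun x => (1/2) * (fderiv ℝ f x 1 + a * fderiv ℝ f x Complex.I)) w u
        = (1/2) * (fderiv ℝ (fderiv ℝ f) w u 1 + a * fderiv ℝ (fderiv ℝ f) w u Complex.I) := by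
    intro a u
    rw [fderiv_const_mul (hD1.fun_add (hDI.const_mul a)) ((1:ℂ)/2)]
    rw [ContinuousLinearMap.smul_apply, fderiv_fun_add hD1 (hDI.const_mul a),
      ContinuousLinearMap.add_apply, fderiv_const_mul hDI a, ContinuousLinearMap.smul_apply]
    rw [fderiv2_apply hU hf hw, fderiv2_apply hU hf hw]
    simp [smul_eq_mul]
  have key' : ∀ (a : ℂ) (u : ℂ),
      fderiv ℝ (fun x => (1/2) * (fderiv ℝ f x 1 - a * fderiv ℝ f x Complex.I)) w u
        = (1/2) * (fderiv ℝ (fderiv ℝ f) w u 1 - a * fderiv ℝ (fderiv ℝ f) w u Complex.I) := by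
    intro a u
    rw [fderiv_const_mul (hD1.fun_sub (hDI.const_mul a)) ((1:ℂ)/2)]
    rw [ContinuousLinearMap.smul_apply, fderiv_fun_sub hD1 (hDI.const_mul a),
      ContinuousLinearMap.sub_apply, fderiv_const_mul hDI a, ContinuousLinearMap.smul_apply]
    rw [fderiv2_apply hU hf hw, fderiv2_apply hU hf hw]
    simp [smul_eq_mul]
  show (1/2) * (fderiv ℝ (wdb f) w 1 - Complex.I * fderiv ℝ (wdb f) w Complex.I)
      = (1/2) * (fderiv ℝ (wd f) w 1 + Complex.I * fderiv ℝ (wd f) w Complex.I)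
  have ewdb : wdb f = fun x => (1/2) * (fderiv ℝ f x 1 + Complex.I * fderiv ℝ f x Complex.I) := rfl
  have ewd : wd f = fun x => (1/2) * (fderiv ℝ f x 1 - Complex.I * fderiv ℝ f x Complex.I) := rfl
  rw [ewdb, ewd, key, key, key', key']
  rw [hsym 1 Complex.I]
  ring

lemma comm_iter (hU : IsOpen U) (hg : ContDiffOn ℝ (⊤:ℕ∞) g U) (n : ℕ) (hw : w ∈ U) :
    wdb (wd^[n] g) w = wd^[n] (wdb g) w := by
  induction n generalizing g w with
  | zero => rfl
  | succ n ih =>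
    rw [Function.iterate_succ_apply]
    rw [ih (wd_contDiffOn hU hg) hw]
    have h1 : ∀ x ∈ U, wdb (wd g) x = wd (wdb g) x := fun x hx => (clairaut hU hg hx).symm
    rw [wd_iter_congrOn hU h1 n hw, ← Function.iterate_succ_apply]

lemma comm_iter' (hU : IsOpen U) (hg : ContDiffOn ℝ (⊤:ℕ∞) g U) (n : ℕ) (hw : w ∈ U) :
    wd (wdb^[n] g) w = wdb^[n] (wd g) w := by
  induction n generalizing g w with
  | zero => rfl
  | succ n ih =>
    rw [Function.iterate_succ_apply]
    rw [ih (wdb_contDiffOn hU hg) hw]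
    have h1 : ∀ x ∈ U, wd (wdb g) x = wdb (wd g) x := fun x hx => clairaut hU hg hx
    rw [wdb_iter_congrOn hU h1 n hw, ← Function.iterate_succ_apply]

end Lemmas
section Aux
open MvPolynomial Finset

theorem aux (b : ℕ) : ∃ c : ℕ → ℂ, ∃ q : ℕ → ℕ → MvPolynomial (Fin 2) ℂ,
    c b = (-(2*Complex.I)⁻¹)^b ∧ (∀ j, b < j → c j = 0) ∧ (∀ r s, b < r ∨ b < s → q r s = 0) ∧
    ∀ U : Set ℂ, IsOpen U → ∀ f : ℂ → ℂ, ContDiffOn ℝ (⊤:ℕ∞) f U → ∀ w ∈ U,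
      Tang^[b] f w =
        (∑ j ∈ Finset.range (b+1), c j * (conj w) ^ j * wdb^[j] f w) +
          ∑ r ∈ Finset.range (b+1), ∑ s ∈ Finset.range (b+1),
            MvPolynomial.eval ![w, conj w] (q r s) * wd^[r+1] (wdb^[s] f) w := by
  induction b with
  | zero =>
    refine ⟨fun j => if j = 0 then 1 else 0, fun _ _ => 0, by simp, ?_, by simp, ?_⟩
    · intro j hj
      simp [Nat.pos_iff_ne_zero.mp hj]
    · intro U hU f hf w hw
      simp
  | succ b ih =>
    obtain ⟨c, q, hcb, hct, hqt, hkey⟩ := ih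
    set cI : ℂ := (2*Complex.I)⁻¹ with hcI
    refine ⟨fun j => -cI * ((j:ℂ) * c j + if j = 0 then 0 else c (j-1)),
      fun r s => MvPolynomial.C cI *
        ((if r = 0 ∧ s ≤ b then MvPolynomial.C (c s) * X 0 * X 1 ^ s else 0)
          + (X 0 * pderiv 0 (q r s) - X 1 * pderiv 1 (q r s))
          + (if r = 0 then 0 else X 0 * q (r-1) s)
          - (if s = 0 then 0 else X 1 * q r (s-1))), ?_, ?_, ?_, ?_⟩
    · -- top coefficient
      simp only [Nat.add_eq_zero, Nat.succ_ne_zero, and_false, if_false,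
        Nat.add_sub_cancel]
      rw [hct (b+1) (by omega), hcb]
      push_cast
      ring
    · -- c tail
      intro j hj
      beta_reduce
      rw [hct j (by omega)]
      have : (if j = 0 then (0:ℂ) else c (j-1)) = 0 := by
        rcases eq_or_ne j 0 with h | h
        · simp [h]
        · rw [if_neg h, hct (j-1) (by omega)]
      rw [this]
      simp
    · -- q tail
      intro r s hrs
      have h1 : q r s = 0 := by
        apply hqt; omega
      have h2 : ¬(r = 0 ∧ s ≤ b) := by omega
      have h3 : (if r = 0 then (0 : MvPolynomial (Fin 2) ℂ) else X 0 * q (r-1) s) = 0 := by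
        rcases eq_or_ne r 0 with h | h
        · simp [h]
        · rw [if_neg h, hqt (r-1) s (by omega), mul_zero]
      have h4 : (if s = 0 then (0 : MvPolynomial (Fin 2) ℂ) else X 1 * q r (s-1)) = 0 := by
        rcases eq_or_ne s 0 with h | h
        · simp [h]
        · rw [if_neg h, hqt r (s-1) (by omega), mul_zero]
      beta_reduce
      rw [h1, if_neg h2, h3, h4]
      simp
    · -- the identity
      intro U hU f hf w hw
      beta_reduce
      -- the function G agreeing with Tang^[b] f on U
      set G : ℂ → ℂ := fun x =>
        (∑ j ∈ Finset.range (b+1), c j * (conj x) ^ j * wdb^[j] f x) +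
          ∑ r ∈ Finset.range (b+1), ∑ s ∈ Finset.range (b+1),
            MvPolynomial.eval ![x, conj x] (q r s) * wd^[r+1] (wdb^[s] f) x with hGdef
      have hTG : ∀ x ∈ U, Tang^[b] f x = G x := fun x hx => hkey U hU f hf x hx
      have hstep : Tang^[b+1] f w = cI * (w * wd G w - conj w * wdb G w) := by
        rw [Function.iterate_succ_apply']
        show cI * (w * wd (Tang^[b] f) w - conj w * wdb (Tang^[b] f) w) = _
        rw [wd_congrOn hU hTG hw, wdb_congrOn hU hTG hw]
      -- differentiability facts
      have dg : ∀ j : ℕ, ContDiffOn ℝ (⊤:ℕ∞) (wdb^[j] f) U := wdb_iter_contDiffOn hU hf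
      have dH : ∀ r s : ℕ, ContDiffOn ℝ (⊤:ℕ∞) (wd^[r+1] (wdb^[s] f)) U :=
        fun r s => wd_iter_contDiffOn hU (dg s) (r+1)
      have dgw : ∀ j : ℕ, DifferentiableAt ℝ (wdb^[j] f) w := fun j => sm_diffAt hU (dg j) hw
      have dHw : ∀ r s : ℕ, DifferentiableAt ℝ (wd^[r+1] (wdb^[s] f)) w :=
        fun r s => sm_diffAt hU (dH r s) hw
      have dcp : ∀ j : ℕ, DifferentiableAt ℝ (fun x : ℂ => c j * (conj x) ^ j) w :=
        fun j => ((diff_conj_pow j) w).const_mul (c j)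
      have dF1 : ∀ j : ℕ, DifferentiableAt ℝ (fun x => c j * (conj x) ^ j * wdb^[j] f x) w :=
        fun j => (dcp j).mul (dgw j)
      have dF2 : ∀ r s : ℕ, DifferentiableAt ℝ
          (fun x => MvPolynomial.eval ![x, conj x] (q r s) * wd^[r+1] (wdb^[s] f) x) w :=
        fun r s => ((polyf_differentiable (q r s)) w).mul (dHw r s)
      have dA : DifferentiableAt ℝ
          (fun x => ∑ j ∈ Finset.range (b+1), c j * (conj x) ^ j * wdb^[j] f x) w :=
        DifferentiableAt.fun_sum (fun j _ => dF1 j)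
      have dB : DifferentiableAt ℝ (fun x => ∑ r ∈ Finset.range (b+1), ∑ s ∈ Finset.range (b+1),
          MvPolynomial.eval ![x, conj x] (q r s) * wd^[r+1] (wdb^[s] f) x) w :=
        DifferentiableAt.fun_sum (fun r _ => DifferentiableAt.fun_sum (fun s _ => dF2 r s))
      -- wd of the pieces
      have hcp0 : ∀ j : ℕ, wd (fun x : ℂ => c j * (conj x) ^ j) w = 0 := by
        intro j
        have h := wd_const_mul (w := w) (c j) (h := fun x : ℂ => (conj x : ℂ) ^ j)
          ((diff_conj_pow j) w)
        rw [wd_conj_pow] at h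
        simpa using h
      have hcp1 : ∀ j : ℕ, wdb (fun x : ℂ => c j * (conj x) ^ j) w
          = c j * ((j : ℂ) * (conj w) ^ (j-1)) := by
        intro j
        have h := wdb_const_mul (w := w) (c j) (h := fun x : ℂ => (conj x : ℂ) ^ j)
          ((diff_conj_pow j) w)
        rw [wdb_conj_pow] at h
        exact h
      have hwdF1 : ∀ j : ℕ, wd (fun x => c j * (conj x) ^ j * wdb^[j] f x) w
          = c j * (conj w) ^ j * wd^[1] (wdb^[j] f) w := by
        intro j
        have h := wd_mul (f := fun x : ℂ => c j * (conj x) ^ j) (g := wdb^[j] f) (w := w)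
          (dcp j) (dgw j)
        calc wd (fun x => c j * (conj x) ^ j * wdb^[j] f x) w
            = wd (fun x : ℂ => c j * (conj x) ^ j) w * wdb^[j] f w
              + (c j * (conj w) ^ j) * wd (wdb^[j] f) w := h
          _ = c j * (conj w) ^ j * wd^[1] (wdb^[j] f) w := by
              rw [hcp0, Function.iterate_one]; ring
      have hwdbF1 : ∀ j : ℕ, wdb (fun x => c j * (conj x) ^ j * wdb^[j] f x) w
          = c j * ((j : ℂ) * (conj w) ^ (j-1)) * wdb^[j] f w
            + c j * (conj w) ^ j * wdb^[j+1] f w := by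
        intro j
        have h := wdb_mul (f := fun x : ℂ => c j * (conj x) ^ j) (g := wdb^[j] f) (w := w)
          (dcp j) (dgw j)
        calc wdb (fun x => c j * (conj x) ^ j * wdb^[j] f x) w
            = wdb (fun x : ℂ => c j * (conj x) ^ j) w * wdb^[j] f w
              + (c j * (conj w) ^ j) * wdb (wdb^[j] f) w := h
          _ = _ := by
              rw [hcp1, Function.iterate_succ_apply']
      have hwdF2 : ∀ r s : ℕ, wd
          (fun x => MvPolynomial.eval ![x, conj x] (q r s) * wd^[r+1] (wdb^[s] f) x) w
          = MvPolynomial.eval ![w, conj w] (pderiv 0 (q r s)) * wd^[r+1] (wdb^[s] f) w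
            + MvPolynomial.eval ![w, conj w] (q r s) * wd^[r+1+1] (wdb^[s] f) w := by
        intro r s
        have h := wd_mul (f := polyf (q r s)) (g := wd^[r+1] (wdb^[s] f)) (w := w)
          ((polyf_differentiable (q r s)) w) (dHw r s)
        calc wd (fun x => MvPolynomial.eval ![x, conj x] (q r s) * wd^[r+1] (wdb^[s] f) x) w
            = wd (polyf (q r s)) w * wd^[r+1] (wdb^[s] f) w
              + MvPolynomial.eval ![w, conj w] (q r s) * wd (wd^[r+1] (wdb^[s] f)) w := h
          _ = _ := by
              rw [wd_polyf, Function.iterate_succ_apply' wd (r+1)]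
              rfl
      have hwdbF2 : ∀ r s : ℕ, wdb
          (fun x => MvPolynomial.eval ![x, conj x] (q r s) * wd^[r+1] (wdb^[s] f) x) w
          = MvPolynomial.eval ![w, conj w] (pderiv 1 (q r s)) * wd^[r+1] (wdb^[s] f) w
            + MvPolynomial.eval ![w, conj w] (q r s) * wd^[r+1] (wdb^[s+1] f) w := by
        intro r s
        have h := wdb_mul (f := polyf (q r s)) (g := wd^[r+1] (wdb^[s] f)) (w := w)
          ((polyf_differentiable (q r s)) w) (dHw r s)
        have hcomm : wdb (wd^[r+1] (wdb^[s] f)) w = wd^[r+1] (wdb^[s+1] f) w := by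
          rw [comm_iter hU (dg s) (r+1) hw,
            show wdb (wdb^[s] f) = wdb^[s+1] f from (Function.iterate_succ_apply' wdb s f).symm ▸ rfl]
        calc wdb (fun x => MvPolynomial.eval ![x, conj x] (q r s) * wd^[r+1] (wdb^[s] f) x) w
            = wdb (polyf (q r s)) w * wd^[r+1] (wdb^[s] f) w
              + MvPolynomial.eval ![w, conj w] (q r s) * wdb (wd^[r+1] (wdb^[s] f)) w := h
          _ = _ := by
              rw [wdb_polyf, hcomm]
              rfl
      -- derivatives of G
      have hwdG : wd G w
          = (∑ j ∈ Finset.range (b+1), c j * (conj w) ^ j * wd^[1] (wdb^[j] f) w)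
            + ∑ r ∈ Finset.range (b+1), ∑ s ∈ Finset.range (b+1),
              (MvPolynomial.eval ![w, conj w] (pderiv 0 (q r s)) * wd^[r+1] (wdb^[s] f) w
                + MvPolynomial.eval ![w, conj w] (q r s) * wd^[r+1+1] (wdb^[s] f) w) := by
        calc wd G w
            = wd (fun x => ∑ j ∈ Finset.range (b+1), c j * (conj x) ^ j * wdb^[j] f x) w
              + wd (fun x => ∑ r ∈ Finset.range (b+1), ∑ s ∈ Finset.range (b+1),
                  MvPolynomial.eval ![x, conj x] (q r s) * wd^[r+1] (wdb^[s] f) x) w :=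
              wd_add dA dB
          _ = (∑ j ∈ Finset.range (b+1), wd (fun x => c j * (conj x) ^ j * wdb^[j] f x) w)
              + ∑ r ∈ Finset.range (b+1), wd (fun x => ∑ s ∈ Finset.range (b+1),
                  MvPolynomial.eval ![x, conj x] (q r s) * wd^[r+1] (wdb^[s] f) x) w := by
              rw [wd_sum _ _ (fun j _ => dF1 j),
                wd_sum _ _ (fun r _ => DifferentiableAt.fun_sum (fun s _ => dF2 r s))]
          _ = _ := by
              refine congrArg₂ (· + ·) (Finset.sum_congr rfl fun j _ => hwdF1 j) ?_
              refine Finset.sum_congr rfl fun r _ => ?_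
              rw [wd_sum _ _ (fun s _ => dF2 r s)]
              exact Finset.sum_congr rfl fun s _ => hwdF2 r s
      have hwdbG : wdb G w
          = (∑ j ∈ Finset.range (b+1),
              (c j * ((j : ℂ) * (conj w) ^ (j-1)) * wdb^[j] f w
                + c j * (conj w) ^ j * wdb^[j+1] f w))
            + ∑ r ∈ Finset.range (b+1), ∑ s ∈ Finset.range (b+1),
              (MvPolynomial.eval ![w, conj w] (pderiv 1 (q r s)) * wd^[r+1] (wdb^[s] f) w
                + MvPolynomial.eval ![w, conj w] (q r s) * wd^[r+1] (wdb^[s+1] f) w) := by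
        calc wdb G w
            = wdb (fun x => ∑ j ∈ Finset.range (b+1), c j * (conj x) ^ j * wdb^[j] f x) w
              + wdb (fun x => ∑ r ∈ Finset.range (b+1), ∑ s ∈ Finset.range (b+1),
                  MvPolynomial.eval ![x, conj x] (q r s) * wd^[r+1] (wdb^[s] f) x) w :=
              wdb_add dA dB
          _ = (∑ j ∈ Finset.range (b+1), wdb (fun x => c j * (conj x) ^ j * wdb^[j] f x) w)
              + ∑ r ∈ Finset.range (b+1), wdb (fun x => ∑ s ∈ Finset.range (b+1),
                  MvPolynomial.eval ![x, conj x] (q r s) * wd^[r+1] (wdb^[s] f) x) w := by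
              rw [wdb_sum _ _ (fun j _ => dF1 j),
                wdb_sum _ _ (fun r _ => DifferentiableAt.fun_sum (fun s _ => dF2 r s))]
          _ = _ := by
              refine congrArg₂ (· + ·) (Finset.sum_congr rfl fun j _ => hwdbF1 j) ?_
              refine Finset.sum_congr rfl fun r _ => ?_
              rw [wdb_sum _ _ (fun s _ => dF2 r s)]
              exact Finset.sum_congr rfl fun s _ => hwdbF2 r s
      rw [hstep]
      -- canonical sums
      set S1 : ℂ := ∑ j ∈ Finset.range (b+1),
        cI * ((c j * w * (conj w) ^ j) * wd^[1] (wdb^[j] f) w) with hS1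
      set V1 : ℂ := ∑ r ∈ Finset.range (b+1), ∑ s ∈ Finset.range (b+1),
        cI * ((w * MvPolynomial.eval ![w, conj w] (pderiv 0 (q r s))) * wd^[r+1] (wdb^[s] f) w)
        with hV1
      set V2 : ℂ := ∑ r ∈ Finset.range (b+1), ∑ s ∈ Finset.range (b+1),
        cI * ((conj w * MvPolynomial.eval ![w, conj w] (pderiv 1 (q r s)))
          * wd^[r+1] (wdb^[s] f) w) with hV2
      set S3 : ℂ := ∑ r ∈ Finset.range (b+1), ∑ s ∈ Finset.range (b+1),
        cI * ((w * MvPolynomial.eval ![w, conj w] (q r s)) * wd^[r+1+1] (wdb^[s] f) w) with hS3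
      set S4 : ℂ := ∑ r ∈ Finset.range (b+1), ∑ s ∈ Finset.range (b+1),
        cI * ((conj w * MvPolynomial.eval ![w, conj w] (q r s)) * wd^[r+1] (wdb^[s+1] f) w)
        with hS4
      set S5 : ℂ := ∑ j ∈ Finset.range (b+1),
        cI * (((j : ℂ) * c j) * (conj w) ^ j * wdb^[j] f w) with hS5
      set S6 : ℂ := ∑ j ∈ Finset.range (b+1),
        cI * (c j * (conj w) ^ (j+1) * wdb^[j+1] f w) with hS6
      -- left side
      have eA : (cI * w) * (∑ j ∈ Finset.range (b+1), c j * (conj w) ^ j * wd^[1] (wdb^[j] f) w)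
          = S1 := by
        rw [hS1, Finset.mul_sum]
        exact Finset.sum_congr rfl fun j _ => by ring
      have eB : (cI * w) * (∑ r ∈ Finset.range (b+1), ∑ s ∈ Finset.range (b+1),
            (MvPolynomial.eval ![w, conj w] (pderiv 0 (q r s)) * wd^[r+1] (wdb^[s] f) w
              + MvPolynomial.eval ![w, conj w] (q r s) * wd^[r+1+1] (wdb^[s] f) w))
          = V1 + S3 := by
        rw [hV1, hS3, Finset.mul_sum, ← Finset.sum_add_distrib]
        refine Finset.sum_congr rfl fun r _ => ?_
        rw [Finset.mul_sum, ← Finset.sum_add_distrib]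
        exact Finset.sum_congr rfl fun s _ => by ring
      have eC : (cI * conj w) * (∑ j ∈ Finset.range (b+1),
            (c j * ((j : ℂ) * (conj w) ^ (j-1)) * wdb^[j] f w
              + c j * (conj w) ^ j * wdb^[j+1] f w))
          = S5 + S6 := by
        rw [hS5, hS6, Finset.mul_sum, ← Finset.sum_add_distrib]
        refine Finset.sum_congr rfl fun j _ => ?_
        rcases j with _ | k
        · simp
          ring
        · simp only [Nat.add_sub_cancel]
          push_cast
          ring
      have eD : (cI * conj w) * (∑ r ∈ Finset.range (b+1), ∑ s ∈ Finset.range (b+1),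
            (MvPolynomial.eval ![w, conj w] (pderiv 1 (q r s)) * wd^[r+1] (wdb^[s] f) w
              + MvPolynomial.eval ![w, conj w] (q r s) * wd^[r+1] (wdb^[s+1] f) w))
          = V2 + S4 := by
        rw [hV2, hS4, Finset.mul_sum, ← Finset.sum_add_distrib]
        refine Finset.sum_congr rfl fun r _ => ?_
        rw [Finset.mul_sum, ← Finset.sum_add_distrib]
        exact Finset.sum_congr rfl fun s _ => by ring
      -- right side : main part
      have hM : (∑ j ∈ Finset.range (b+1+1),
            -cI * ((j:ℂ) * c j + if j = 0 then 0 else c (j-1)) * (conj w) ^ j * wdb^[j] f w)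
          = -S5 + -S6 := by
        calc (∑ j ∈ Finset.range (b+1+1),
            -cI * ((j:ℂ) * c j + if j = 0 then 0 else c (j-1)) * (conj w) ^ j * wdb^[j] f w)
            = (∑ j ∈ Finset.range (b+1+1),
                -(cI * (((j:ℂ) * c j) * (conj w) ^ j * wdb^[j] f w)))
              + ∑ j ∈ Finset.range (b+1+1),
                -(cI * ((if j = 0 then (0:ℂ) else c (j-1)) * (conj w) ^ j * wdb^[j] f w)) := by
              rw [← Finset.sum_add_distrib]
              exact Finset.sum_congr rfl fun j _ => by ring
          _ = -S5 + -S6 := by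
              congr 1
              · rw [Finset.sum_neg_distrib, hS5, neg_inj, Finset.sum_range_succ,
                  hct (b+1) (by omega)]
                simp
              · rw [Finset.sum_neg_distrib, hS6, neg_inj, Finset.sum_range_succ']
                simp only [Nat.add_sub_cancel, Nat.succ_ne_zero, if_false, if_pos rfl]
                simp
      -- right side : error part
      have hq'eval : ∀ r s : ℕ, MvPolynomial.eval ![w, conj w] (MvPolynomial.C cI *
            (((if r = 0 ∧ s ≤ b then MvPolynomial.C (c s) * X 0 * X 1 ^ s else 0)
              + (X 0 * pderiv 0 (q r s) - X 1 * pderiv 1 (q r s))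
              + (if r = 0 then 0 else X 0 * q (r-1) s))
              - (if s = 0 then 0 else X 1 * q r (s-1))))
          = cI * (((if r = 0 ∧ s ≤ b then c s * w * (conj w) ^ s else 0)
              + (w * MvPolynomial.eval ![w, conj w] (pderiv 0 (q r s))
                - conj w * MvPolynomial.eval ![w, conj w] (pderiv 1 (q r s)))
              + (if r = 0 then 0 else w * MvPolynomial.eval ![w, conj w] (q (r-1) s)))
              - (if s = 0 then 0 else conj w * MvPolynomial.eval ![w, conj w] (q r (s-1)))) := by
        intro r s
        simp [apply_ite (MvPolynomial.eval ![w, conj w])]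
      have hE : (∑ r ∈ Finset.range (b+1+1), ∑ s ∈ Finset.range (b+1+1),
            MvPolynomial.eval ![w, conj w] (MvPolynomial.C cI *
              (((if r = 0 ∧ s ≤ b then MvPolynomial.C (c s) * X 0 * X 1 ^ s else 0)
                + (X 0 * pderiv 0 (q r s) - X 1 * pderiv 1 (q r s))
                + (if r = 0 then 0 else X 0 * q (r-1) s))
                - (if s = 0 then 0 else X 1 * q r (s-1))))
              * wd^[r+1] (wdb^[s] f) w)
          = S1 + (V1 - V2) + S3 - S4 := by
        have h1 : (∑ r ∈ Finset.range (b+1+1), ∑ s ∈ Finset.range (b+1+1),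
            cI * ((if r = 0 ∧ s ≤ b then c s * w * (conj w) ^ s else 0)
              * wd^[r+1] (wdb^[s] f) w)) = S1 := by
          calc (∑ r ∈ Finset.range (b+1+1), ∑ s ∈ Finset.range (b+1+1),
              cI * ((if r = 0 ∧ s ≤ b then c s * w * (conj w) ^ s else 0)
                * wd^[r+1] (wdb^[s] f) w))
              = ∑ s ∈ Finset.range (b+1+1),
                cI * ((if (0:ℕ) = 0 ∧ s ≤ b then c s * w * (conj w) ^ s else 0)
                  * wd^[0+1] (wdb^[s] f) w) :=
              Finset.sum_eq_single_of_mem 0 (Finset.mem_range.mpr (by omega))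
                (fun r _ hrne => Finset.sum_eq_zero fun s _ => by
                  rw [if_neg (fun hc => hrne hc.1)]; simp)
            _ = S1 := by
              rw [Finset.sum_range_succ, if_neg (by omega : ¬((0:ℕ) = 0 ∧ b+1 ≤ b)), hS1]
              simp only [zero_mul, mul_zero, add_zero]
              refine Finset.sum_congr rfl fun s hs => ?_
              have hsb : s ≤ b := by have := Finset.mem_range.mp hs; omega
              simp [hsb]
        have h2a : (∑ r ∈ Finset.range (b+1+1), ∑ s ∈ Finset.range (b+1+1),
            cI * ((w * MvPolynomial.eval ![w, conj w] (pderiv 0 (q r s)))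
              * wd^[r+1] (wdb^[s] f) w)) = V1 := by
          have hrow : (∑ s ∈ Finset.range (b+1+1),
              cI * ((w * MvPolynomial.eval ![w, conj w] (pderiv 0 (q (b+1) s)))
                * wd^[b+1+1] (wdb^[s] f) w)) = 0 :=
            Finset.sum_eq_zero fun s _ => by rw [hqt (b+1) s (by omega)]; simp
          rw [hV1, Finset.sum_range_succ, hrow, add_zero]
          refine Finset.sum_congr rfl fun r hr => ?_
          rw [Finset.sum_range_succ,
            show (cI * ((w * MvPolynomial.eval ![w, conj w] (pderiv 0 (q r (b+1))))
              * wd^[r+1] (wdb^[b+1] f) w)) = 0 by rw [hqt r (b+1) (by omega)]; simp,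
            add_zero]
        have h2b : (∑ r ∈ Finset.range (b+1+1), ∑ s ∈ Finset.range (b+1+1),
            cI * ((conj w * MvPolynomial.eval ![w, conj w] (pderiv 1 (q r s)))
              * wd^[r+1] (wdb^[s] f) w)) = V2 := by
          have hrow : (∑ s ∈ Finset.range (b+1+1),
              cI * ((conj w * MvPolynomial.eval ![w, conj w] (pderiv 1 (q (b+1) s)))
                * wd^[b+1+1] (wdb^[s] f) w)) = 0 :=
            Finset.sum_eq_zero fun s _ => by rw [hqt (b+1) s (by omega)]; simp
          rw [hV2, Finset.sum_range_succ, hrow, add_zero]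
          refine Finset.sum_congr rfl fun r hr => ?_
          rw [Finset.sum_range_succ,
            show (cI * ((conj w * MvPolynomial.eval ![w, conj w] (pderiv 1 (q r (b+1))))
              * wd^[r+1] (wdb^[b+1] f) w)) = 0 by rw [hqt r (b+1) (by omega)]; simp,
            add_zero]
        have h3 : (∑ r ∈ Finset.range (b+1+1), ∑ s ∈ Finset.range (b+1+1),
            cI * ((if r = 0 then 0 else w * MvPolynomial.eval ![w, conj w] (q (r-1) s))
              * wd^[r+1] (wdb^[s] f) w)) = S3 := by
          rw [hS3, Finset.sum_range_succ',
            show (∑ s ∈ Finset.range (b+1+1),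
              cI * ((if (0:ℕ) = 0 then (0:ℂ)
                  else w * MvPolynomial.eval ![w, conj w] (q (0-1) s))
                * wd^[0+1] (wdb^[s] f) w)) = 0 from Finset.sum_eq_zero fun s _ => by simp,
            add_zero]
          refine Finset.sum_congr rfl fun i hi => ?_
          simp only [eq_false (Nat.succ_ne_zero i), if_false, Nat.add_sub_cancel]
          rw [Finset.sum_range_succ,
            show (cI * ((w * MvPolynomial.eval ![w, conj w] (q i (b+1)))
              * wd^[i+1+1] (wdb^[b+1] f) w)) = 0 by rw [hqt i (b+1) (by omega)]; simp,
            add_zero]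
        have h4 : (∑ r ∈ Finset.range (b+1+1), ∑ s ∈ Finset.range (b+1+1),
            cI * ((if s = 0 then 0 else conj w * MvPolynomial.eval ![w, conj w] (q r (s-1)))
              * wd^[r+1] (wdb^[s] f) w)) = S4 := by
          have hrow : (∑ s ∈ Finset.range (b+1+1),
              cI * ((if s = 0 then 0 else
                  conj w * MvPolynomial.eval ![w, conj w] (q (b+1) (s-1)))
                * wd^[b+1+1] (wdb^[s] f) w)) = 0 := by
            refine Finset.sum_eq_zero fun s _ => ?_
            rcases s with _ | k
            · simp
            · rw [if_neg (Nat.succ_ne_zero k), Nat.add_sub_cancel, hqt (b+1) k (by omega)]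
              simp
          rw [hS4, Finset.sum_range_succ, hrow, add_zero]
          refine Finset.sum_congr rfl fun r hr => ?_
          rw [Finset.sum_range_succ']
          rw [show (cI * ((if (0:ℕ) = 0 then (0:ℂ)
              else conj w * MvPolynomial.eval ![w, conj w] (q r (0-1)))
            * wd^[r+1] (wdb^[0] f) w)) = 0 by simp, add_zero]
          refine Finset.sum_congr rfl fun k hk => ?_
          rw [if_neg (Nat.succ_ne_zero k), Nat.add_sub_cancel]
        calc (∑ r ∈ Finset.range (b+1+1), ∑ s ∈ Finset.range (b+1+1),
            MvPolynomial.eval ![w, conj w] (MvPolynomial.C cI *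
              (((if r = 0 ∧ s ≤ b then MvPolynomial.C (c s) * X 0 * X 1 ^ s else 0)
                + (X 0 * pderiv 0 (q r s) - X 1 * pderiv 1 (q r s))
                + (if r = 0 then 0 else X 0 * q (r-1) s))
                - (if s = 0 then 0 else X 1 * q r (s-1))))
              * wd^[r+1] (wdb^[s] f) w)
            = ∑ r ∈ Finset.range (b+1+1), ∑ s ∈ Finset.range (b+1+1),
              (cI * ((if r = 0 ∧ s ≤ b then c s * w * (conj w) ^ s else 0)
                  * wd^[r+1] (wdb^[s] f) w)
                + (cI * ((w * MvPolynomial.eval ![w, conj w] (pderiv 0 (q r s)))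
                    * wd^[r+1] (wdb^[s] f) w)
                  - cI * ((conj w * MvPolynomial.eval ![w, conj w] (pderiv 1 (q r s)))
                    * wd^[r+1] (wdb^[s] f) w))
                + cI * ((if r = 0 then 0 else w * MvPolynomial.eval ![w, conj w] (q (r-1) s))
                    * wd^[r+1] (wdb^[s] f) w)
                - cI * ((if s = 0 then 0 else
                      conj w * MvPolynomial.eval ![w, conj w] (q r (s-1)))
                    * wd^[r+1] (wdb^[s] f) w)) := by
              refine Finset.sum_congr rfl fun r _ => Finset.sum_congr rfl fun s _ => ?_
              rw [hq'eval r s]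
              ring
          _ = S1 + (V1 - V2) + S3 - S4 := by
              simp only [Finset.sum_add_distrib, Finset.sum_sub_distrib]
              rw [h1, h2a, h2b, h3, h4]
      calc cI * (w * wd G w - conj w * wdb G w)
          = (cI * w) * wd G w - (cI * conj w) * wdb G w := by ring
        _ = S1 + (V1 + S3) - (S5 + S6 + (V2 + S4)) := by
            rw [hwdG, hwdbG, mul_add (cI * w), mul_add (cI * conj w), eA, eB, eC, eD]
        _ = _ := by
            rw [hM, hE]
            ring

end Aux

/-- `T_w^b ≡ Σ_{j=0}^b c_j w̄^j ∂^j/∂w̄^j (mod ∂/∂w)`, with `c_b ≠ 0`, where the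
error term is a combination `Σ_{r,s≤b} q_{r,s}(w,w̄) ∂^{r+s+1}/∂w^{r+1}∂w̄^s`; in particular,
on anti-holomorphic functions `T_w^b = Σ_{j=0}^b c_j w̄^j ∂^j/∂w̄^j`. -/
theorem tangential_power_mod_holomorphic_derivative (b : ℕ) :
    ∃ c : ℕ → ℂ, c b ≠ 0 ∧ ∃ q : ℕ → ℕ → MvPolynomial (Fin 2) ℂ,
      (∀ U : Set ℂ, IsOpen U → ∀ f : ℂ → ℂ, ContDiffOn ℝ (⊤ : ℕ∞) f U → ∀ w ∈ U,
        Tang^[b] f w =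
          (∑ j ∈ Finset.range (b+1), c j * (conj w) ^ j * wdb^[j] f w) +
            ∑ r ∈ Finset.range (b+1), ∑ s ∈ Finset.range (b+1),
              MvPolynomial.eval ![w, conj w] (q r s) * wd^[r+1] (wdb^[s] f) w) ∧
      (∀ U : Set ℂ, IsOpen U → ∀ f : ℂ → ℂ, ContDiffOn ℝ (⊤ : ℕ∞) f U →
        (∀ w ∈ U, wd f w = 0) → ∀ w ∈ U,
          Tang^[b] f w = ∑ j ∈ Finset.range (b+1), c j * (conj w) ^ j * wdb^[j] f w) := by
  obtain ⟨c, q, hcb, hct, hqt, hkey⟩ := aux b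
  refine ⟨c, ?_, q, fun U hU f hf w hw => hkey U hU f hf w hw, ?_⟩
  · rw [hcb]
    apply pow_ne_zero
    simp [Complex.I_ne_zero]
  · intro U hU f hf hwd w hw
    rw [hkey U hU f hf w hw]
    have key0 : ∀ r s : ℕ, wd^[r+1] (wdb^[s] f) w = 0 := by
      intro r s
      have h1 : ∀ x ∈ U, wd (wdb^[s] f) x = 0 := by
        intro x hx
        rw [comm_iter' hU hf s hx,
          wdb_iter_congrOn (g := fun _ => 0) hU (fun y hy => hwd y hy) s hx,
          wdb_iter_zero]
      rw [Function.iterate_succ_apply]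
      exact wd_iter_eq_zero_on hU h1 r hw
    have hz : (∑ r ∈ Finset.range (b+1), ∑ s ∈ Finset.range (b+1),
        MvPolynomial.eval ![w, conj w] (q r s) * wd^[r+1] (wdb^[s] f) w) = 0 :=
      Finset.sum_eq_zero fun r _ => Finset.sum_eq_zero fun s _ => by
        rw [key0 r s, mul_zero]
    rw [hz, add_zero]
end
end

section
/- Let k ∈ ℕ and p ∈ (1, ∞). For every function f : D* → ℂ that is C^∞-smooth on D* with Σ_{|α|≤k} ∫_{D*} |D^α f(w)|^p |w|² dA(w) < ∞, and for every ε > 0, there exists a function g : ℂ → ℂ that is C^∞-smooth on an open set containing D̄∖{0} (the closed unit disc minus the origin) such that Σ_{|α|≤k} ∫_{D*} |D^α(f − g)(w)|^p |w|² dA(w) < ε. In other words, C^∞(D̄∖{0}) ∩ W^{k,p}(D*, |w|²) is dense in the weighted Sobolev space W^{k,p}(D*, |w|²). -/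
open MeasureTheory Complex ComplexConjugate

noncomputable section

/-- The open unit disc. -/
def unitD : Set ℂ := Metric.ball 0 1

/-- The punctured unit disc. -/
def unitDstar : Set ℂ := unitD \ {0}

/-- `D^α = ∂^{|α|}/∂w^{α₁}∂w̄^{α₂}`. -/
def Dop (α : ℕ × ℕ) (f : ℂ → ℂ) : ℂ → ℂ := wd^[α.1] (wdb^[α.2] f)

/-- Multi-indices `(α₁,α₂)` with `α₁ + α₂ ≤ k`. -/
def multiIdx (k : ℕ) : Finset (ℕ × ℕ) :=
  (Finset.range (k+1) ×ˢ Finset.range (k+1)).filter (fun α => α.1 + α.2 ≤ k)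

/-- unified Wirtinger-type operator -/
def aop (e : ℂ) (f : ℂ → ℂ) : ℂ → ℂ := fun w =>
  (1/2) * (fderiv ℝ f w 1 + e * fderiv ℝ f w Complex.I)

lemma wd_eq_aop : wd = aop (-Complex.I) := by
  funext f w; simp [wd, aop]; ring

lemma wdb_eq_aop : wdb = aop Complex.I := rfl

lemma aop_congr (e : ℂ) {s : Set ℂ} (hs : IsOpen s) {u v : ℂ → ℂ}
    (h : ∀ x ∈ s, u x = v x) {w : ℂ} (hw : w ∈ s) : aop e u w = aop e v w := by
  have hne : u =ᶠ[nhds w] v := Filter.eventually_of_mem (hs.mem_nhds hw) h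
  simp only [aop, hne.fderiv_eq]

lemma aop_sub (e : ℂ) {u v : ℂ → ℂ} {w : ℂ} (hu : DifferentiableAt ℝ u w)
    (hv : DifferentiableAt ℝ v w) : aop e (u - v) w = aop e u w - aop e v w := by
  have h : (u - v) = fun x => u x - v x := rfl
  simp only [aop, h, fderiv_fun_sub hu hv, ContinuousLinearMap.sub_apply]
  ring

lemma aop_const_mul (e c : ℂ) {u : ℂ → ℂ} {w : ℂ} (hu : DifferentiableAt ℝ u w) :
    aop e (fun z => c * u z) w = c * aop e u w := by
  simp only [aop, fderiv_const_mul hu c, ContinuousLinearMap.smul_apply, smul_eq_mul]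
  ring

lemma aop_scale (e : ℂ) (r : ℝ) {u : ℂ → ℂ} {w : ℂ}
    (hu : DifferentiableAt ℝ u ((r:ℂ)*w)) :
    aop e (fun z => u ((r:ℂ)*z)) w = (r:ℂ) * aop e u ((r:ℂ)*w) := by
  set M : ℂ →L[ℝ] ℂ := ContinuousLinearMap.restrictScalars ℝ ((ContinuousLinearMap.mul ℂ ℂ) (r:ℂ)) with hMdef
  have hMap : ∀ z : ℂ, M z = (r:ℂ) * z := fun z => rfl
  have hM : HasFDerivAt (fun z : ℂ => (r:ℂ)*z) M w := by
    have := M.hasFDerivAt (x := w)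
    simpa [funext hMap] using this
  have hcomp : HasFDerivAt (fun z => u ((r:ℂ)*z)) ((fderiv ℝ u ((r:ℂ)*w)).comp M) w :=
    HasFDerivAt.comp w (hu.hasFDerivAt) hM
  have hf := hcomp.fderiv
  simp only [aop, hf, ContinuousLinearMap.comp_apply, hMap]
  have h1 : (r:ℂ) * 1 = (r:ℝ) • (1:ℂ) := by simp [Complex.real_smul]
  have h2 : (r:ℂ) * Complex.I = (r:ℝ) • (Complex.I) := by simp [Complex.real_smul]
  rw [h1, h2, (fderiv ℝ u ((r:ℂ)*w)).map_smul, (fderiv ℝ u ((r:ℂ)*w)).map_smul]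
  simp only [Complex.real_smul, smul_eq_mul]
  ring

lemma aop_contDiffOn (e : ℂ) {s : Set ℂ} (hs : IsOpen s) {u : ℂ → ℂ}
    (hu : ContDiffOn ℝ (⊤ : ℕ∞) u s) : ContDiffOn ℝ (⊤ : ℕ∞) (aop e u) s := by
  have h1 : ContDiffOn ℝ (⊤ : ℕ∞) (fderiv ℝ u) s := hu.fderiv_of_isOpen hs (by exact_mod_cast le_top)
  exact contDiffOn_const.mul ((h1.clm_apply contDiffOn_const).add
    (contDiffOn_const.mul (h1.clm_apply contDiffOn_const)))

lemma aop_iter_contDiffOn (e : ℂ) {s : Set ℂ} (hs : IsOpen s) {u : ℂ → ℂ}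
    (hu : ContDiffOn ℝ (⊤ : ℕ∞) u s) (m : ℕ) :
    ContDiffOn ℝ (⊤ : ℕ∞) ((aop e)^[m] u) s := by
  induction m with
  | zero => simpa using hu
  | succ n ih => rw [Function.iterate_succ']; exact aop_contDiffOn e hs ih

lemma aop_iter_congr (e : ℂ) {s : Set ℂ} (hs : IsOpen s) {u v : ℂ → ℂ}
    (h : ∀ x ∈ s, u x = v x) (m : ℕ) :
    ∀ x ∈ s, (aop e)^[m] u x = (aop e)^[m] v x := by
  induction m with
  | zero => simpa using h
  | succ n ih =>
    intro x hx
    simp only [Function.iterate_succ', Function.comp_apply]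
    exact aop_congr e hs ih hx

lemma aop_iter_sub (e : ℂ) {s : Set ℂ} (hs : IsOpen s) {u v : ℂ → ℂ}
    (hu : ContDiffOn ℝ (⊤ : ℕ∞) u s) (hv : ContDiffOn ℝ (⊤ : ℕ∞) v s) (m : ℕ) :
    ∀ x ∈ s, (aop e)^[m] (u - v) x = (aop e)^[m] u x - (aop e)^[m] v x := by
  induction m with
  | zero => intro x _; simp
  | succ n ih =>
    intro x hx
    simp only [Function.iterate_succ', Function.comp_apply]
    have step1 : aop e ((aop e)^[n] (u - v)) x
        = aop e ((aop e)^[n] u - (aop e)^[n] v) x := by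
      refine aop_congr e hs (fun y hy => ?_) hx
      simpa using ih y hy
    rw [step1]
    exact aop_sub e
      (((aop_iter_contDiffOn e hs hu n).differentiableOn (by simp)).differentiableAt
        (hs.mem_nhds hx))
      (((aop_iter_contDiffOn e hs hv n).differentiableOn (by simp)).differentiableAt
        (hs.mem_nhds hx))

lemma aop_iter_scale (e : ℂ) {s : Set ℂ} (hs : IsOpen s) {u : ℂ → ℂ}
    (hu : ContDiffOn ℝ (⊤ : ℕ∞) u s) (r : ℝ) (m : ℕ) (c : ℂ) :
    ∀ w : ℂ, (r:ℂ)*w ∈ s →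
      (aop e)^[m] (fun z => c * u ((r:ℂ)*z)) w = c * (r:ℂ)^m * (aop e)^[m] u ((r:ℂ)*w) := by
  induction m with
  | zero => intro w _; simp
  | succ n ih =>
    intro w hw
    have hT : IsOpen {z : ℂ | (r:ℂ)*z ∈ s} := hs.preimage (by continuity)
    simp only [Function.iterate_succ', Function.comp_apply]
    have step1 : aop e ((aop e)^[n] (fun z => c * u ((r:ℂ)*z))) w
        = aop e (fun z => (c * (r:ℂ)^n) * (aop e)^[n] u ((r:ℂ)*z)) w := by
      refine aop_congr e hT (fun y hy => ?_) hw
      simpa [mul_assoc] using ih y hy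
    rw [step1]
    have hvsm : ContDiffOn ℝ (⊤ : ℕ∞) ((aop e)^[n] u) s := aop_iter_contDiffOn e hs hu n
    have hvd : DifferentiableAt ℝ ((aop e)^[n] u) ((r:ℂ)*w) :=
      ((hvsm.differentiableOn (by simp)).differentiableAt (hs.mem_nhds hw))
    have hcompd : DifferentiableAt ℝ (fun z => (aop e)^[n] u ((r:ℂ)*z)) w := by
      have : DifferentiableAt ℝ (fun z : ℂ => (r:ℂ)*z) w :=
        (differentiable_id.const_mul ((r:ℂ))).differentiableAt
      exact hvd.comp w this
    rw [aop_const_mul e (c * (r:ℂ)^n) hcompd, aop_scale e r hvd]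
    ring

lemma dop_contDiffOn {s : Set ℂ} (hs : IsOpen s) {f : ℂ → ℂ}
    (hf : ContDiffOn ℝ (⊤ : ℕ∞) f s) (α : ℕ × ℕ) :
    ContDiffOn ℝ (⊤ : ℕ∞) (Dop α f) s := by
  rw [Dop, wd_eq_aop, wdb_eq_aop]
  exact aop_iter_contDiffOn _ hs (aop_iter_contDiffOn _ hs hf _) _

lemma dop_sub {s : Set ℂ} (hs : IsOpen s) {f g : ℂ → ℂ}
    (hf : ContDiffOn ℝ (⊤ : ℕ∞) f s) (hg : ContDiffOn ℝ (⊤ : ℕ∞) g s) (α : ℕ × ℕ)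
    {w : ℂ} (hw : w ∈ s) : Dop α (f - g) w = Dop α f w - Dop α g w := by
  simp only [Dop, wd_eq_aop, wdb_eq_aop]
  have inner : ∀ x ∈ s, (aop Complex.I)^[α.2] (f - g) x
      = ((aop Complex.I)^[α.2] f - (aop Complex.I)^[α.2] g) x := by
    intro x hx
    simpa using aop_iter_sub Complex.I hs hf hg α.2 x hx
  calc (aop (-Complex.I))^[α.1] ((aop Complex.I)^[α.2] (f - g)) w
      = (aop (-Complex.I))^[α.1] ((aop Complex.I)^[α.2] f - (aop Complex.I)^[α.2] g) w :=
        aop_iter_congr _ hs inner α.1 w hw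
    _ = _ := aop_iter_sub _ hs (aop_iter_contDiffOn _ hs hf _)
        (aop_iter_contDiffOn _ hs hg _) α.1 w hw

lemma dop_scale {s : Set ℂ} (hs : IsOpen s) {f : ℂ → ℂ}
    (hf : ContDiffOn ℝ (⊤ : ℕ∞) f s) (r : ℝ) (α : ℕ × ℕ)
    {w : ℂ} (hw : (r:ℂ)*w ∈ s) :
    Dop α (fun z => f ((r:ℂ)*z)) w = (r:ℂ)^(α.1+α.2) * Dop α f ((r:ℂ)*w) := by
  simp only [Dop, wd_eq_aop, wdb_eq_aop]
  have hT : IsOpen {z : ℂ | (r:ℂ)*z ∈ s} := hs.preimage (by continuity)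
  have inner : ∀ x ∈ {z : ℂ | (r:ℂ)*z ∈ s}, (aop Complex.I)^[α.2] (fun z => f ((r:ℂ)*z)) x
      = (fun z => ((r:ℂ)^α.2) * (aop Complex.I)^[α.2] f ((r:ℂ)*z)) x := by
    intro x hx
    have h1 : (fun z => f ((r:ℂ)*z)) = (fun z => (1:ℂ) * f ((r:ℂ)*z)) := by
      funext z; ring
    rw [h1, aop_iter_scale Complex.I hs hf r α.2 1 x hx]
    ring
  have step1 : (aop (-Complex.I))^[α.1] ((aop Complex.I)^[α.2] (fun z => f ((r:ℂ)*z))) w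
      = (aop (-Complex.I))^[α.1] (fun z => ((r:ℂ)^α.2) * (aop Complex.I)^[α.2] f ((r:ℂ)*z)) w :=
    aop_iter_congr _ hT inner α.1 w hw
  rw [step1, aop_iter_scale (-Complex.I) hs (aop_iter_contDiffOn _ hs hf _) r α.1 _ w hw]
  ring

lemma pointwise_pow_bound {p : ℝ} (hp : 1 ≤ p) {x y c : ℝ} (hx : 0 ≤ x) (hy : 0 ≤ y)
    (hc : 0 ≤ c) :
    ENNReal.ofReal ((x+y)^p * c) ≤
      ENNReal.ofReal ((2:ℝ)^p) * (ENNReal.ofReal (x^p*c) + ENNReal.ofReal (y^p*c)) := by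
  have hxp := Real.rpow_nonneg hx p
  have hyp := Real.rpow_nonneg hy p
  have h2p : (0:ℝ) < (2:ℝ)^p := Real.rpow_pos_of_pos two_pos p
  have key : (x+y)^p ≤ (2:ℝ)^p * (x^p + y^p) := by
    have h1 : x + y ≤ 2 * max x y := by
      rcases le_total x y with h|h
      · rw [max_eq_right h]; linarith
      · rw [max_eq_left h]; linarith
    have h2 : (x+y)^p ≤ (2*max x y)^p := Real.rpow_le_rpow (by positivity) h1 (by linarith)
    have h3 : ((2:ℝ)*max x y)^p = (2:ℝ)^p * (max x y)^p :=
      Real.mul_rpow (by norm_num) (le_max_of_le_left hx)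
    have h4 : (max x y)^p ≤ x^p + y^p := by
      rcases le_total x y with h|h
      · rw [max_eq_right h]; linarith
      · rw [max_eq_left h]; linarith
    calc (x+y)^p ≤ (2*max x y)^p := h2
      _ = (2:ℝ)^p*(max x y)^p := h3
      _ ≤ (2:ℝ)^p*(x^p+y^p) := by nlinarith
  calc ENNReal.ofReal ((x+y)^p*c) ≤ ENNReal.ofReal ((2:ℝ)^p * (x^p*c + y^p*c)) := by
        apply ENNReal.ofReal_le_ofReal; nlinarith
    _ = ENNReal.ofReal ((2:ℝ)^p) * (ENNReal.ofReal (x^p*c) + ENNReal.ofReal (y^p*c)) := by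
        rw [ENNReal.ofReal_mul (by positivity), ENNReal.ofReal_add (by positivity) (by positivity)]

lemma lintegral_scale_le {H : ℂ → ENNReal} (hH : Measurable H) {S T : Set ℂ}
    (hS : MeasurableSet S) {r : ℝ} (hr : 1/2 ≤ r) (hr1 : r ≤ 1) (hmaps : ∀ w ∈ S, (r:ℂ)*w ∈ T) :
    ∫⁻ w in S, H ((r:ℂ)*w) ≤ ENNReal.ofReal 4 * ∫⁻ u in T, H u := by
  have hr0 : (0:ℝ) < r := by linarith
  have hrne : r ≠ 0 := ne_of_gt hr0
  set φ : ℂ → ℂ := fun w => r • w with hφ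
  have hsm : ∀ w : ℂ, (r:ℂ)*w = φ w := by
    intro w; simp [hφ, Complex.real_smul]
  have hφm : Measurable φ := (measurable_id.const_smul r)
  set U : Set ℂ := (fun w : ℂ => r⁻¹ • w) ⁻¹' S with hU
  have hUm : MeasurableSet U := hS.preimage (measurable_id.const_smul r⁻¹)
  have hSU : S ⊆ φ ⁻¹' U := by
    intro w hw
    show (r:ℝ)⁻¹ • φ w ∈ S
    rw [hφ]
    simp only [smul_smul, inv_mul_cancel₀ hrne, one_smul]
    exact hw
  have hUT : U ⊆ T := by
    intro u hu
    simp only [hU, Set.mem_preimage] at hu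
    have := hmaps _ hu
    rw [hsm, hφ] at this
    simp only [smul_smul, mul_inv_cancel₀ hrne, one_smul] at this
    exact this
  calc ∫⁻ w in S, H ((r:ℂ)*w)
      = ∫⁻ w in S, H (φ w) := by simp_rw [hsm]
    _ ≤ ∫⁻ w in φ ⁻¹' U, H (φ w) := lintegral_mono_set hSU
    _ = ∫⁻ y, H y ∂(Measure.map φ (volume.restrict (φ ⁻¹' U))) :=
        (lintegral_map hH hφm).symm
    _ = ∫⁻ y, H y ∂((Measure.map φ volume).restrict U) := by
        rw [Measure.restrict_map hφm hUm]
    _ = ∫⁻ y, H y ∂((ENNReal.ofReal |(r ^ (Module.finrank ℝ ℂ))⁻¹| • volume).restrict U) := by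
        rw [MeasureTheory.Measure.map_addHaar_smul volume hrne]
    _ = ENNReal.ofReal |(r ^ (Module.finrank ℝ ℂ))⁻¹| * ∫⁻ y in U, H y := by
        rw [Measure.restrict_smul, lintegral_smul_measure, smul_eq_mul]
    _ ≤ ENNReal.ofReal 4 * ∫⁻ u in T, H u := by
        gcongr
        · rw [Complex.finrank_real_complex, _root_.abs_of_nonneg (by positivity)]
          rw [inv_le_comm₀ (by positivity) (by norm_num)]
          nlinarith

lemma unitDstar_isOpen : IsOpen unitDstar :=
  Metric.isOpen_ball.sdiff isClosed_singleton

lemma unitDstar_measurableSet : MeasurableSet unitDstar :=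
  unitDstar_isOpen.measurableSet

lemma mem_unitDstar_iff {w : ℂ} : w ∈ unitDstar ↔ ‖w‖ < 1 ∧ w ≠ 0 := by
  simp [unitDstar, unitD, Metric.mem_ball, Complex.dist_eq]

set_option maxHeartbeats 2000000 in
lemma key (p : ℝ) (hp : 1 < p) (h : ℂ → ℂ) (hcont : ContinuousOn h unitDstar)
    (hmeas : Measurable h)
    (hfin : (∫⁻ w in unitDstar,
        ENNReal.ofReal (‖h w‖ ^ p * ‖w‖ ^ (2:ℕ))) < ⊤)
    (m : ℕ) (δ : ℝ) (hδ : 0 < δ) :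
    ∃ t : ℝ, 1/2 ≤ t ∧ t < 1 ∧ ∀ r : ℝ, t < r → r < 1 →
      (∫⁻ w in unitDstar,
        ENNReal.ofReal (‖h w - (r:ℂ)^m * h ((r:ℂ)*w)‖ ^ p * ‖w‖ ^ (2:ℕ)))
        ≤ ENNReal.ofReal δ := by
  have hp0 : (0:ℝ) < p := by linarith
  have h2p : (0:ℝ) < (2:ℝ)^p := Real.rpow_pos_of_pos two_pos p
  set H : ℂ → ENNReal :=
    fun w => ENNReal.ofReal (‖h w‖ ^ p * ‖w‖ ^ (2:ℕ)) with hHdef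
  have habsm : Measurable (fun z : ℂ => ‖z‖) := continuous_norm.measurable
  have hHmeas : Measurable H := by
    apply ENNReal.measurable_ofReal.comp
    exact ((habsm.comp hmeas).pow_const p).mul ((habsm.pow_const 2))
  set δ' : ℝ := δ / (1 + 17 * (2:ℝ)^p) with hδ'def
  have hδ' : 0 < δ' := by positivity
  set ν : Measure ℂ := (volume.restrict unitDstar).withDensity H with hνdef
  set E : ℕ → Set ℂ :=
    fun n => {w : ℂ | ‖w‖ < 1/(n+1) ∨ 1 - 1/(n+1) < ‖w‖} with hEdef
  have hEmeas : ∀ n, MeasurableSet (E n) := by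
    intro n
    have : E n = (fun z : ℂ => ‖z‖) ⁻¹' (Set.Iio (1/(n+1)) ∪ Set.Ioi (1 - 1/(n+1))) := by
      ext w; simp [hEdef]
    rw [this]
    exact habsm (measurableSet_Iio.union measurableSet_Ioi)
  have hEanti : Antitone E := by
    intro i j hij w hw
    have hij' : (1:ℝ)/(j+1) ≤ 1/(i+1) := by
      apply one_div_le_one_div_of_le (by positivity)
      have : (i:ℝ) ≤ j := by exact_mod_cast hij
      linarith
    rcases hw with hw | hw
    · exact Or.inl (lt_of_lt_of_le hw hij')
    · exact Or.inr (lt_of_le_of_lt (by linarith) hw)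
  have hν_univ : ν Set.univ = ∫⁻ w in unitDstar, H w := by
    rw [hνdef, withDensity_apply _ MeasurableSet.univ, Measure.restrict_univ]
  have hν_fin : ν Set.univ ≠ ⊤ := by rw [hν_univ]; exact hfin.ne
  have hνE0 : ν (⋂ n, E n) = 0 := by
    have hmeasInt : MeasurableSet (⋂ n, E n) := MeasurableSet.iInter hEmeas
    rw [hνdef, withDensity_apply _ hmeasInt]
    apply setLIntegral_measure_zero
    rw [Measure.restrict_apply hmeasInt]
    have : (⋂ n, E n) ∩ unitDstar = ∅ := by
      ext w
      simp only [Set.mem_inter_iff, Set.mem_iInter, Set.mem_empty_iff_false, iff_false]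
      rintro ⟨hall, hwD⟩
      rw [mem_unitDstar_iff] at hwD
      have habs0 : 0 < ‖w‖ := norm_pos_iff.mpr hwD.2
      obtain ⟨n1, hn1⟩ := exists_nat_one_div_lt habs0
      obtain ⟨n2, hn2⟩ := exists_nat_one_div_lt (by linarith [hwD.1] : (0:ℝ) < 1 - ‖w‖)
      have h1 := hall (max n1 n2)
      have hle1 : (1:ℝ)/(max n1 n2 + 1) ≤ 1/(n1+1) := by
        apply one_div_le_one_div_of_le (by positivity)
        have : (n1:ℝ) ≤ max n1 n2 := by exact_mod_cast le_max_left n1 n2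
        linarith
      have hle2 : (1:ℝ)/(max n1 n2 + 1) ≤ 1/(n2+1) := by
        apply one_div_le_one_div_of_le (by positivity)
        have : (n2:ℝ) ≤ max n1 n2 := by exact_mod_cast le_max_right n1 n2
        linarith
      rcases h1 with h1 | h1
      · have : (1:ℝ)/(n1+1) < ‖w‖ := hn1
        linarith
      · have : (1:ℝ)/(n2+1) < 1 - ‖w‖ := hn2
        linarith
    rw [this]
    simp
  have htend : Filter.Tendsto (ν ∘ E) Filter.atTop (nhds 0) := by
    have := tendsto_measure_iInter_atTop (μ := ν)
      (fun n => (hEmeas n).nullMeasurableSet) hEanti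
      ⟨0, by exact ne_top_of_le_ne_top hν_fin (measure_mono (Set.subset_univ _))⟩
    rwa [hνE0] at this
  have hofδ' : (0:ENNReal) < ENNReal.ofReal δ' := ENNReal.ofReal_pos.mpr hδ'
  obtain ⟨n₀, hn₀⟩ := (htend.eventually_lt_const hofδ').exists
  set n₁ : ℕ := max n₀ 7 with hn₁def
  have hE1 : ν (E n₁) < ENNReal.ofReal δ' :=
    lt_of_le_of_lt (measure_mono (hEanti (le_max_left _ _))) hn₀
  set a : ℝ := 1/((n₁:ℝ)+1) with hadef
  set c : ℝ := 1 - a with hcdef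
  have hn₁7 : (7:ℝ) ≤ (n₁:ℝ) := by exact_mod_cast le_max_right n₀ 7
  have ha_pos : 0 < a := by positivity
  have ha_le : a ≤ 1/8 := by
    rw [hadef]
    rw [div_le_div_iff₀ (by positivity) (by norm_num)]
    linarith
  have hc_lt1 : c < 1 := by rw [hcdef]; linarith
  have hc_ge : (7:ℝ)/8 ≤ c := by rw [hcdef]; linarith
  set b : ℝ := (1+c)/2 with hbdef
  have hcb : c < b := by rw [hbdef]; linarith
  have hb1 : b < 1 := by rw [hbdef]; linarith
  have hb_ge : (15:ℝ)/16 ≤ b := by rw [hbdef]; linarith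
  have hab : a < b := by linarith
  have hb_pos : 0 < b := by linarith
  -- compact sets
  set K : Set ℂ := Metric.closedBall (0:ℂ) b \ Metric.ball 0 (a/2) with hKdef
  have hKcomp : IsCompact K := (isCompact_closedBall (0:ℂ) b).diff Metric.isOpen_ball
  have hK_mem : ∀ w : ℂ, w ∈ K ↔ a/2 ≤ ‖w‖ ∧ ‖w‖ ≤ b := by
    intro w
    simp only [hKdef, Set.mem_diff, Metric.mem_closedBall, Metric.mem_ball,
      Complex.dist_eq, sub_zero, not_lt]
    tauto
  have hKsub : K ⊆ unitDstar := by
    intro w hw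
    rw [hK_mem] at hw
    rw [mem_unitDstar_iff]
    constructor
    · linarith [hw.2]
    · intro h0
      rw [h0] at hw
      simp at hw
      linarith [hw.1]
  have hKcont : ContinuousOn (fun w => ‖h w‖) K :=
    continuous_norm.comp_continuousOn (hcont.mono hKsub)
  have hKne : K.Nonempty := by
    refine ⟨(b:ℂ), ?_⟩
    rw [hK_mem]
    rw [Complex.norm_real, Real.norm_eq_abs, _root_.abs_of_nonneg hb_pos.le]
    constructor <;> linarith
  obtain ⟨x₀, hx₀K, hx₀max⟩ := hKcomp.exists_isMaxOn hKne hKcont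
  set C : ℝ := ‖h x₀‖ with hCdef
  have hC0 : 0 ≤ C := norm_nonneg _
  have hC : ∀ x ∈ K, ‖h x‖ ≤ C := fun x hx => hx₀max hx
  -- choice of θ
  set V : ENNReal := volume (Metric.ball (0:ℂ) 1) with hVdef
  have hV : V ≠ ⊤ := measure_ball_lt_top.ne
  set t₀ : ℝ := δ' / (V.toReal + 1) with ht₀def
  have hVtnn : 0 ≤ V.toReal := ENNReal.toReal_nonneg
  have ht₀ : 0 < t₀ := by positivity
  set θ : ℝ := min 1 t₀ with hθdef
  have hθpos : 0 < θ := lt_min one_pos ht₀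
  have hθ1 : θ ≤ 1 := min_le_left _ _
  have hθV : ENNReal.ofReal (θ^p) * V ≤ ENNReal.ofReal δ' := by
    have h1 : θ^p ≤ θ := by
      calc θ^p ≤ θ^(1:ℝ) := Real.rpow_le_rpow_of_exponent_ge hθpos hθ1 hp.le
        _ = θ := Real.rpow_one θ
    have h2 : θ ≤ t₀ := min_le_right _ _
    calc ENNReal.ofReal (θ^p) * V ≤ ENNReal.ofReal t₀ * ENNReal.ofReal (V.toReal + 1) := by
          gcongr
          · exact le_trans h1 h2
          · calc V = ENNReal.ofReal V.toReal := (ENNReal.ofReal_toReal hV).symm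
              _ ≤ ENNReal.ofReal (V.toReal + 1) := ENNReal.ofReal_le_ofReal (by linarith)
      _ = ENNReal.ofReal (t₀ * (V.toReal + 1)) := (ENNReal.ofReal_mul ht₀.le).symm
      _ = ENNReal.ofReal δ' := by
          congr 1
          rw [ht₀def]
          field_simp
  -- uniform continuity
  have hucont := hKcomp.uniformContinuousOn_of_continuous (hcont.mono hKsub)
  obtain ⟨d, hd, hdp⟩ := Metric.uniformContinuousOn_iff.1 hucont (θ/2) (by positivity)
  -- the threshold
  set t : ℝ := max (max (1/2) (c/b)) (max (1 - d/2) (1 - θ/((2*(C+1))*(m+1)))) with htdef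
  have hcb_lt1 : c/b < 1 := (div_lt_one hb_pos).mpr hcb
  have ht_lt1 : t < 1 := by
    apply max_lt (max_lt (by norm_num) hcb_lt1)
    apply max_lt
    · linarith
    · have : 0 < θ/((2*(C+1))*(m+1)) := by positivity
      linarith
  refine ⟨t, le_trans (le_max_left _ _) (le_max_left _ _), ht_lt1, ?_⟩
  intro r htr hr1
  have hr_half : 1/2 ≤ r := le_of_lt (lt_of_le_of_lt (le_trans (le_max_left _ _) (le_max_left _ _)) htr)
  have hr0 : 0 < r := by linarith
  have hr_cb : c/b < r := lt_of_le_of_lt (le_trans (le_max_right _ _) (le_max_left _ _)) htr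
  have hr_d : 1 - d/2 < r := lt_of_le_of_lt (le_trans (le_max_left _ _) (le_max_right _ _)) htr
  have hr_θ : 1 - θ/((2*(C+1))*(m+1)) < r :=
    lt_of_le_of_lt (le_trans (le_max_right _ _) (le_max_right _ _)) htr
  have hrb : c < r * b := by
    rw [div_lt_iff₀ hb_pos] at hr_cb
    linarith
  -- r^m bounds
  have hrm_le1 : r^m ≤ 1 := pow_le_one₀ hr0.le hr1.le
  have hrm_ge : 1 - (m:ℝ)*(1-r) ≤ r^m := by
    have := one_add_mul_le_pow (by linarith : (-2:ℝ) ≤ r - 1) m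
    have heq : 1 + (m:ℝ) * (r - 1) = 1 - m*(1-r) := by ring
    rw [heq] at this
    simpa using this
  have hrm_close : 1 - r^m ≤ θ/(2*(C+1)) := by
    have hq : (0:ℝ) < θ/(2*(C+1)) := by positivity
    have heqd : θ/((2*(C+1))*((m:ℝ)+1)) = (θ/(2*(C+1)))/((m:ℝ)+1) := by rw [div_div]
    have h1r : 1 - r < (θ/(2*(C+1)))/((m:ℝ)+1) := by rw [← heqd]; linarith
    have hm0 : (0:ℝ) ≤ (m:ℝ) := Nat.cast_nonneg m
    have h2 : (m:ℝ)*(1-r) ≤ (m:ℝ) * ((θ/(2*(C+1)))/((m:ℝ)+1)) :=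
      mul_le_mul_of_nonneg_left h1r.le hm0
    have h3 : (m:ℝ) * ((θ/(2*(C+1)))/((m:ℝ)+1)) ≤ θ/(2*(C+1)) := by
      have hd : (m:ℝ)/((m:ℝ)+1) ≤ 1 := by
        rw [div_le_one (by positivity)]; linarith
      calc (m:ℝ) * ((θ/(2*(C+1)))/((m:ℝ)+1)) = ((m:ℝ)/((m:ℝ)+1)) * (θ/(2*(C+1))) := by ring
        _ ≤ 1 * (θ/(2*(C+1))) := mul_le_mul_of_nonneg_right hd hq.le
        _ = θ/(2*(C+1)) := one_mul _
    linarith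
  -- good set
  set G : Set ℂ := Metric.closedBall (0:ℂ) b \ Metric.ball 0 a with hGdef
  have hGmeas : MeasurableSet G :=
    Metric.isClosed_closedBall.measurableSet.diff Metric.isOpen_ball.measurableSet
  have hG_mem : ∀ w : ℂ, w ∈ G ↔ a ≤ ‖w‖ ∧ ‖w‖ ≤ b := by
    intro w
    simp only [hGdef, Set.mem_diff, Metric.mem_closedBall, Metric.mem_ball,
      Complex.dist_eq, sub_zero, not_lt]
    tauto
  have hGK : G ⊆ K := by
    intro w hw
    rw [hG_mem] at hw
    rw [hK_mem]
    exact ⟨by linarith [hw.1], hw.2⟩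
  -- pointwise good estimate
  have hgood : ∀ w ∈ unitDstar ∩ G,
      ‖h w - (r:ℂ)^m * h ((r:ℂ)*w)‖ ≤ θ := by
    intro w hw
    obtain ⟨hwD, hwG⟩ := hw
    rw [hG_mem] at hwG
    have hwK : w ∈ K := hGK ((hG_mem w).mpr hwG)
    have habs_rw : ‖(r:ℂ)*w‖ = r * ‖w‖ := by
      rw [norm_mul, Complex.norm_real, Real.norm_eq_abs, _root_.abs_of_nonneg hr0.le]
    have hrwK : (r:ℂ)*w ∈ K := by
      rw [hK_mem, habs_rw]
      constructor
      · have := mul_le_mul hr_half hwG.1 ha_pos.le hr0.le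
        linarith
      · have := mul_le_mul hr1.le hwG.2 (norm_nonneg _) (by norm_num : (0:ℝ) ≤ 1)
        linarith
    have hdist : dist w ((r:ℂ)*w) < d := by
      rw [Complex.dist_eq]
      have heq : w - (r:ℂ)*w = ((1 - r : ℝ) : ℂ) * w := by push_cast; ring
      rw [heq, norm_mul, Complex.norm_real, Real.norm_eq_abs,
        _root_.abs_of_nonneg (by linarith : (0:ℝ) ≤ 1 - r)]
      calc (1-r) * ‖w‖ ≤ (1-r) * 1 := by
            apply mul_le_mul_of_nonneg_left _ (by linarith)
            linarith [hwG.2]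
        _ = 1 - r := mul_one _
        _ < d/2 := by linarith
        _ < d := by linarith
    have hd1 : ‖h w - h ((r:ℂ)*w)‖ < θ/2 := by
      have := hdp w hwK ((r:ℂ)*w) hrwK hdist
      rwa [Complex.dist_eq] at this
    have hd2 : ‖(1 - (r:ℂ)^m) * h ((r:ℂ)*w)‖ ≤ θ/2 := by
      rw [norm_mul]
      have hcast : ((r:ℂ))^m = ((r^m : ℝ) : ℂ) := by push_cast; ring
      have : ‖1 - (r:ℂ)^m‖ = 1 - r^m := by
        rw [hcast]
        rw [show (1 : ℂ) - ((r^m:ℝ):ℂ) = (((1 - r^m : ℝ)):ℂ) by push_cast; ring]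
        rw [Complex.norm_real, Real.norm_eq_abs, _root_.abs_of_nonneg (by linarith)]
      rw [this]
      have hhb : ‖h ((r:ℂ)*w)‖ ≤ C := hC _ hrwK
      calc (1 - r^m) * ‖h ((r:ℂ)*w)‖ ≤ (θ/(2*(C+1))) * C := by
            apply mul_le_mul hrm_close hhb (norm_nonneg _) (by positivity)
        _ ≤ θ/2 := by
            rw [div_mul_eq_mul_div, div_le_div_iff₀ (by positivity) (by norm_num)]
            nlinarith
    calc ‖h w - (r:ℂ)^m * h ((r:ℂ)*w)‖
        = ‖(h w - h ((r:ℂ)*w)) + (1 - (r:ℂ)^m) * h ((r:ℂ)*w)‖ := by ring_nf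
      _ ≤ ‖h w - h ((r:ℂ)*w)‖ + ‖(1 - (r:ℂ)^m) * h ((r:ℂ)*w)‖ :=
          norm_add_le _ _
      _ ≤ θ/2 + θ/2 := by linarith
      _ = θ := by ring
  -- splitting of the integral
  set S : Set ℂ := unitDstar \ G with hSdef
  have hSmeas : MeasurableSet S := unitDstar_measurableSet.diff hGmeas
  set Φ : ℂ → ENNReal := fun w =>
    ENNReal.ofReal (‖h w - (r:ℂ)^m * h ((r:ℂ)*w)‖ ^ p * ‖w‖ ^ (2:ℕ))
    with hΦdef
  have hsplit : (∫⁻ w in unitDstar, Φ w) = (∫⁻ w in unitDstar ∩ G, Φ w) + ∫⁻ w in S, Φ w := by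
    rw [hSdef, ← lintegral_union (unitDstar_measurableSet.diff hGmeas)
      ((Set.disjoint_sdiff_right).mono_left Set.inter_subset_right), Set.inter_union_diff]
  -- good part
  have hgoodint : (∫⁻ w in unitDstar ∩ G, Φ w) ≤ ENNReal.ofReal δ' := by
    have hb1' : ∀ w ∈ unitDstar ∩ G, Φ w ≤ ENNReal.ofReal (θ^p) := by
      intro w hw
      apply ENNReal.ofReal_le_ofReal
      have h1 : ‖h w - (r:ℂ)^m * h ((r:ℂ)*w)‖ ^ p ≤ θ^p :=
        Real.rpow_le_rpow (norm_nonneg _) (hgood w hw) hp0.le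
      have h2 : ‖w‖ ^ (2:ℕ) ≤ 1 := by
        apply pow_le_one₀ (norm_nonneg _)
        have := ((hG_mem w).1 hw.2).2; linarith
      calc ‖h w - (r:ℂ)^m * h ((r:ℂ)*w)‖ ^ p * ‖w‖ ^ (2:ℕ)
          ≤ θ^p * 1 := mul_le_mul h1 h2 (by positivity) (Real.rpow_nonneg hθpos.le p)
        _ = θ^p := mul_one _
    calc (∫⁻ w in unitDstar ∩ G, Φ w) ≤ ∫⁻ _ in unitDstar ∩ G, ENNReal.ofReal (θ^p) :=
          setLIntegral_mono' (unitDstar_measurableSet.inter hGmeas) hb1'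
      _ = ENNReal.ofReal (θ^p) * volume (unitDstar ∩ G) := setLIntegral_const _ _
      _ ≤ ENNReal.ofReal (θ^p) * V := by
          gcongr
          exact measure_mono (fun w hw => hw.1.1)
      _ ≤ ENNReal.ofReal δ' := hθV
  -- bad part
  have hνE_eq : ν (E n₁) = ∫⁻ w in E n₁ ∩ unitDstar, H w := by
    rw [hνdef, withDensity_apply _ (hEmeas n₁), Measure.restrict_restrict (hEmeas n₁)]
  have hνE_le : (∫⁻ w in E n₁ ∩ unitDstar, H w) ≤ ENNReal.ofReal δ' := by
    rw [← hνE_eq]; exact hE1.le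
  have hSsubE : S ⊆ E n₁ ∩ unitDstar := by
    intro w hw
    obtain ⟨hwD, hwnG⟩ := hw
    refine ⟨?_, hwD⟩
    have hcase : ‖w‖ < a ∨ c < ‖w‖ := by
      rw [hG_mem] at hwnG; push_neg at hwnG
      by_cases hlt : ‖w‖ < a
      · exact Or.inl hlt
      · exact Or.inr (by linarith [hwnG (not_lt.1 hlt)])
    simp only [hEdef, Set.mem_setOf_eq]
    rw [← hadef, ← hcdef]
    exact hcase
  have hSH : (∫⁻ w in S, H w) ≤ ENNReal.ofReal δ' :=
    le_trans (lintegral_mono_set hSsubE) hνE_le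
  have habs_rw : ∀ w : ℂ, ‖(r:ℂ)*w‖ = r * ‖w‖ := by
    intro w
    rw [norm_mul, Complex.norm_real, Real.norm_eq_abs, _root_.abs_of_nonneg hr0.le]
  have hmapsto : ∀ w ∈ S, (r:ℂ)*w ∈ E n₁ ∩ unitDstar := by
    intro w hw
    obtain ⟨hwD, hwnG⟩ := hw
    rw [mem_unitDstar_iff] at hwD
    constructor
    · simp only [hEdef, Set.mem_setOf_eq]
      rw [← hadef, ← hcdef, habs_rw w]
      rw [hG_mem] at hwnG; push_neg at hwnG
      by_cases hlt : ‖w‖ < a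
      · left
        have : r * ‖w‖ ≤ 1 * ‖w‖ :=
          mul_le_mul_of_nonneg_right hr1.le (norm_nonneg _)
        linarith
      · right
        have hbw : b < ‖w‖ := hwnG (not_lt.1 hlt)
        have : r * b ≤ r * ‖w‖ := mul_le_mul_of_nonneg_left hbw.le hr0.le
        linarith
    · rw [mem_unitDstar_iff, habs_rw w]
      have hwlt : ‖w‖ < 1 := hwD.1
      constructor
      · have : r * ‖w‖ < r * 1 := mul_lt_mul_of_pos_left hwlt hr0
        linarith
      · exact mul_ne_zero (Complex.ofReal_ne_zero.mpr hr0.ne') hwD.2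
  have hinv4 : ((r:ℝ)^2)⁻¹ ≤ 4 := by
    rw [inv_le_comm₀ (by positivity) (by norm_num)]
    nlinarith
  have hSHr : (∫⁻ w in S, ENNReal.ofReal (‖h ((r:ℂ)*w)‖ ^ p * ‖w‖ ^ (2:ℕ)))
      ≤ ENNReal.ofReal (16*δ') := by
    have hptw : ∀ w : ℂ, ENNReal.ofReal (‖h ((r:ℂ)*w)‖ ^ p * ‖w‖ ^ (2:ℕ))
        = ENNReal.ofReal ((r^2)⁻¹) * H ((r:ℂ)*w) := by
      intro w
      rw [hHdef]
      simp only
      rw [← ENNReal.ofReal_mul (by positivity)]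
      congr 1
      rw [habs_rw w, mul_pow]
      have : ((r:ℝ)^2) ≠ 0 := by positivity
      field_simp
    simp_rw [hptw]
    rw [lintegral_const_mul' _ _ ENNReal.ofReal_ne_top]
    have h4 : (∫⁻ w in S, H ((r:ℂ)*w)) ≤ ENNReal.ofReal 4 * ∫⁻ u in E n₁ ∩ unitDstar, H u :=
      lintegral_scale_le hHmeas hSmeas hr_half hr1.le hmapsto
    calc ENNReal.ofReal ((r^2)⁻¹) * ∫⁻ w in S, H ((r:ℂ)*w)
        ≤ ENNReal.ofReal 4 * (ENNReal.ofReal 4 * ENNReal.ofReal δ') := by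
          apply mul_le_mul' (ENNReal.ofReal_le_ofReal hinv4)
          exact le_trans h4 (mul_le_mul' le_rfl hνE_le)
      _ = ENNReal.ofReal (16*δ') := by
          rw [← ENNReal.ofReal_mul (by norm_num), ← ENNReal.ofReal_mul (by norm_num)]
          congr 1
          ring
  have habs_sub : ∀ x y : ℂ, ‖x - y‖ ≤ ‖x‖ + ‖y‖ := by
    intro x y
    simpa using norm_sub_le x y
  have hbadptw : ∀ w ∈ S, Φ w ≤ ENNReal.ofReal ((2:ℝ)^p) *
      (H w + ENNReal.ofReal (‖h ((r:ℂ)*w)‖ ^ p * ‖w‖ ^ (2:ℕ))) := by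
    intro w _
    have hxy : ‖h w - (r:ℂ)^m * h ((r:ℂ)*w)‖
        ≤ ‖h w‖ + ‖h ((r:ℂ)*w)‖ := by
      have h1 := habs_sub (h w) ((r:ℂ)^m * h ((r:ℂ)*w))
      have h2 : ‖(r:ℂ)^m * h ((r:ℂ)*w)‖ ≤ ‖h ((r:ℂ)*w)‖ := by
        rw [norm_mul]
        have hc : ‖(r:ℂ)^m‖ = r^m := by
          rw [norm_pow, Complex.norm_real, Real.norm_eq_abs, _root_.abs_of_nonneg hr0.le]
        rw [hc]
        have := mul_le_mul_of_nonneg_right hrm_le1 (norm_nonneg (h ((r:ℂ)*w)))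
        linarith
      linarith
    calc Φ w ≤ ENNReal.ofReal
          ((‖h w‖ + ‖h ((r:ℂ)*w)‖)^p * ‖w‖ ^ (2:ℕ)) := by
          apply ENNReal.ofReal_le_ofReal
          apply mul_le_mul_of_nonneg_right _ (by positivity)
          exact Real.rpow_le_rpow (norm_nonneg _) hxy hp0.le
      _ ≤ ENNReal.ofReal ((2:ℝ)^p) *
          (ENNReal.ofReal (‖h w‖^p * ‖w‖ ^ (2:ℕ)) +
            ENNReal.ofReal (‖h ((r:ℂ)*w)‖^p * ‖w‖ ^ (2:ℕ))) :=
          pointwise_pow_bound hp.le (norm_nonneg _) (norm_nonneg _) (by positivity)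
  have hbadint : (∫⁻ w in S, Φ w) ≤
      ENNReal.ofReal ((2:ℝ)^p) * (ENNReal.ofReal δ' + ENNReal.ofReal (16*δ')) := by
    calc (∫⁻ w in S, Φ w)
        ≤ ∫⁻ w in S, ENNReal.ofReal ((2:ℝ)^p) *
            (H w + ENNReal.ofReal (‖h ((r:ℂ)*w)‖ ^ p * ‖w‖ ^ (2:ℕ))) :=
          setLIntegral_mono' hSmeas hbadptw
      _ = ENNReal.ofReal ((2:ℝ)^p) * ∫⁻ w in S,
            (H w + ENNReal.ofReal (‖h ((r:ℂ)*w)‖ ^ p * ‖w‖ ^ (2:ℕ))) :=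
          lintegral_const_mul' _ _ ENNReal.ofReal_ne_top
      _ = ENNReal.ofReal ((2:ℝ)^p) * ((∫⁻ w in S, H w) +
            ∫⁻ w in S, ENNReal.ofReal (‖h ((r:ℂ)*w)‖ ^ p * ‖w‖ ^ (2:ℕ))) := by
          rw [lintegral_add_left hHmeas]
      _ ≤ ENNReal.ofReal ((2:ℝ)^p) * (ENNReal.ofReal δ' + ENNReal.ofReal (16*δ')) := by
          exact mul_le_mul' le_rfl (add_le_add hSH hSHr)
  calc (∫⁻ w in unitDstar, Φ w)
      = (∫⁻ w in unitDstar ∩ G, Φ w) + ∫⁻ w in S, Φ w := hsplit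
    _ ≤ ENNReal.ofReal δ' + ENNReal.ofReal ((2:ℝ)^p) *
          (ENNReal.ofReal δ' + ENNReal.ofReal (16*δ')) := add_le_add hgoodint hbadint
    _ = ENNReal.ofReal (δ' + (2:ℝ)^p * (δ' + 16*δ')) := by
        rw [← ENNReal.ofReal_add hδ'.le (by positivity),
          ← ENNReal.ofReal_mul (by positivity),
          ← ENNReal.ofReal_add hδ'.le (by positivity)]
    _ = ENNReal.ofReal δ := by
        congr 1
        rw [hδ'def]
        have hne : (1 + 17 * (2:ℝ)^p) ≠ 0 := by positivity
        field_simp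
        ring

set_option maxHeartbeats 1000000 in
/-- functions smooth on a neighborhood of `D̄∖{0}` are dense in the weighted
Sobolev space `W^{k,p}(D*, |w|²)`. -/
theorem smooth_dense_in_weighted_sobolev (k : ℕ) (p : ℝ) (hp : 1 < p) :
    ∀ f : ℂ → ℂ, ContDiffOn ℝ (⊤ : ℕ∞) f unitDstar →
      (∑ α ∈ multiIdx k, ∫⁻ w in unitDstar,
        ENNReal.ofReal (‖Dop α f w‖ ^ p * ‖w‖ ^ (2:ℕ))) < ⊤ →
      ∀ ε : ℝ, 0 < ε →
        ∃ g : ℂ → ℂ, (∃ U : Set ℂ, IsOpen U ∧ Metric.closedBall (0 : ℂ) 1 \ {0} ⊆ U ∧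
            ContDiffOn ℝ (⊤ : ℕ∞) g U) ∧
          (∑ α ∈ multiIdx k, ∫⁻ w in unitDstar,
            ENNReal.ofReal (‖Dop α (f - g) w‖ ^ p * ‖w‖ ^ (2:ℕ))) <
            ENNReal.ofReal ε := by
  classical
  intro f hf hsum ε hε
  have hαfin : ∀ α ∈ multiIdx k, (∫⁻ w in unitDstar,
      ENNReal.ofReal (‖Dop α f w‖ ^ p * ‖w‖ ^ (2:ℕ))) < ⊤ :=
    ENNReal.sum_lt_top.1 hsum
  set N : ℕ := (multiIdx k).card with hNdef
  set δα : ℝ := ε / (2*((N:ℝ)+1)) with hδαdef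
  have hδα : 0 < δα := by positivity
  -- the measurable continuous surrogates
  set htil : ℕ × ℕ → ℂ → ℂ := fun α => Set.piecewise unitDstar (Dop α f) 0 with htildef
  have htil_eq : ∀ α, ∀ w ∈ unitDstar, htil α w = Dop α f w := by
    intro α w hw
    exact Set.piecewise_eq_of_mem _ _ _ hw
  have hdopcont : ∀ α, ContinuousOn (Dop α f) unitDstar :=
    fun α => (dop_contDiffOn unitDstar_isOpen hf α).continuousOn
  have htil_cont : ∀ α, ContinuousOn (htil α) unitDstar :=
    fun α => (hdopcont α).congr (fun w hw => htil_eq α w hw)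
  have htil_meas : ∀ α, Measurable (htil α) :=
    fun α => ContinuousOn.measurable_piecewise (hdopcont α) continuousOn_const
      unitDstar_measurableSet
  have htil_fin : ∀ α ∈ multiIdx k, (∫⁻ w in unitDstar,
      ENNReal.ofReal (‖htil α w‖ ^ p * ‖w‖ ^ (2:ℕ))) < ⊤ := by
    intro α hα
    have : (∫⁻ w in unitDstar,
        ENNReal.ofReal (‖htil α w‖ ^ p * ‖w‖ ^ (2:ℕ)))
        = ∫⁻ w in unitDstar,
        ENNReal.ofReal (‖Dop α f w‖ ^ p * ‖w‖ ^ (2:ℕ)) := by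
      apply setLIntegral_congr_fun unitDstar_measurableSet
      intro w hw
      beta_reduce
      rw [htil_eq α w hw]
    rw [this]
    exact hαfin α hα
  -- apply `key` to each multi-index
  have hkey : ∀ α ∈ multiIdx k, ∃ t : ℝ, 1/2 ≤ t ∧ t < 1 ∧ ∀ r : ℝ, t < r → r < 1 →
      (∫⁻ w in unitDstar, ENNReal.ofReal
        (‖htil α w - (r:ℂ)^(α.1+α.2) * htil α ((r:ℂ)*w)‖ ^ p
          * ‖w‖ ^ (2:ℕ)))
        ≤ ENNReal.ofReal δα :=
    fun α hα => key p hp (htil α) (htil_cont α) (htil_meas α) (htil_fin α hα) (α.1+α.2) δα hδα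
  choose t ht1 ht2 ht3 using hkey
  have hne : (multiIdx k).Nonempty := by
    refine ⟨(0,0), ?_⟩
    simp [multiIdx]
  have hne' : (multiIdx k).attach.Nonempty := Finset.attach_nonempty_iff.mpr hne
  set tstar : ℝ := (multiIdx k).attach.sup' hne' (fun a => t a.1 a.2) with htstardef
  have htstar_lt1 : tstar < 1 := by
    rw [htstardef, Finset.sup'_lt_iff]
    intro a _
    exact ht2 a.1 a.2
  have htstar_ge : ∀ α (hα : α ∈ multiIdx k), t α hα ≤ tstar := by
    intro α hα
    exact Finset.le_sup' (fun a : {x // x ∈ multiIdx k} => t a.1 a.2)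
      (Finset.mem_attach _ ⟨α, hα⟩)
  have htstar_half : 1/2 ≤ tstar := by
    obtain ⟨α, hα⟩ := hne
    exact le_trans (ht1 α hα) (htstar_ge α hα)
  set r : ℝ := (1 + tstar)/2 with hrdef
  have hr1 : r < 1 := by rw [hrdef]; linarith
  have hr0 : 0 < r := by rw [hrdef]; linarith
  have hrgt : ∀ α (hα : α ∈ multiIdx k), t α hα < r := by
    intro α hα
    have := htstar_ge α hα
    rw [hrdef]
    linarith
  -- the approximating function
  refine ⟨fun w => f ((r:ℂ)*w), ?_, ?_⟩
  · refine ⟨(fun w : ℂ => (r:ℂ)*w) ⁻¹' unitDstar, ?_, ?_, ?_⟩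
    · exact unitDstar_isOpen.preimage (by continuity)
    · intro w hw
      obtain ⟨hw1, hw2⟩ := hw
      simp only [Set.mem_preimage]
      rw [mem_unitDstar_iff]
      constructor
      · rw [norm_mul, Complex.norm_real, Real.norm_eq_abs, _root_.abs_of_nonneg hr0.le]
        have hwb : ‖w‖ ≤ 1 := by
          simpa [Complex.dist_eq] using hw1
        nlinarith
      · apply mul_ne_zero (Complex.ofReal_ne_zero.mpr hr0.ne')
        simpa using hw2
    · have hinner : ContDiffOn ℝ (⊤ : ℕ∞) (fun w : ℂ => (r:ℂ)*w)
          ((fun w : ℂ => (r:ℂ)*w) ⁻¹' unitDstar) :=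
        (contDiff_const.mul contDiff_id).contDiffOn
      exact ContDiffOn.comp hf hinner (fun w hw => hw)
  · -- the estimate
    have hDsub : unitDstar ⊆ (fun w : ℂ => (r:ℂ)*w) ⁻¹' unitDstar := by
      intro w hw
      rw [mem_unitDstar_iff] at hw
      simp only [Set.mem_preimage]
      rw [mem_unitDstar_iff]
      constructor
      · rw [norm_mul, Complex.norm_real, Real.norm_eq_abs, _root_.abs_of_nonneg hr0.le]
        nlinarith [hw.1, norm_nonneg w]
      · exact mul_ne_zero (Complex.ofReal_ne_zero.mpr hr0.ne') hw.2
    have hgsm : ContDiffOn ℝ (⊤ : ℕ∞) (fun w : ℂ => f ((r:ℂ)*w)) unitDstar := by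
      have hinner : ContDiffOn ℝ (⊤ : ℕ∞) (fun w : ℂ => (r:ℂ)*w) unitDstar :=
        (contDiff_const.mul contDiff_id).contDiffOn
      exact ContDiffOn.comp hf hinner hDsub
    have hptw : ∀ α ∈ multiIdx k, ∀ w ∈ unitDstar,
        Dop α (f - fun w => f ((r:ℂ)*w)) w
          = htil α w - (r:ℂ)^(α.1+α.2) * htil α ((r:ℂ)*w) := by
      intro α _ w hw
      have hrw : (r:ℂ)*w ∈ unitDstar := hDsub hw
      rw [dop_sub unitDstar_isOpen hf hgsm α hw]
      rw [dop_scale unitDstar_isOpen hf r α hrw]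
      rw [htil_eq α w hw, htil_eq α ((r:ℂ)*w) hrw]
    have hterm : ∀ α ∈ multiIdx k,
        (∫⁻ w in unitDstar, ENNReal.ofReal
          (‖Dop α (f - fun w => f ((r:ℂ)*w)) w‖ ^ p * ‖w‖ ^ (2:ℕ)))
          ≤ ENNReal.ofReal δα := by
      intro α hα
      have heq : (∫⁻ w in unitDstar, ENNReal.ofReal
          (‖Dop α (f - fun w => f ((r:ℂ)*w)) w‖ ^ p * ‖w‖ ^ (2:ℕ)))
          = ∫⁻ w in unitDstar, ENNReal.ofReal
          (‖htil α w - (r:ℂ)^(α.1+α.2) * htil α ((r:ℂ)*w)‖ ^ p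
            * ‖w‖ ^ (2:ℕ)) := by
        apply setLIntegral_congr_fun unitDstar_measurableSet
        intro w hw
        beta_reduce
        rw [hptw α hα w hw]
      rw [heq]
      exact ht3 α hα r (hrgt α hα) hr1
    calc (∑ α ∈ multiIdx k, ∫⁻ w in unitDstar, ENNReal.ofReal
            (‖Dop α (f - fun w => f ((r:ℂ)*w)) w‖ ^ p * ‖w‖ ^ (2:ℕ)))
        ≤ ∑ _α ∈ multiIdx k, ENNReal.ofReal δα := Finset.sum_le_sum hterm
      _ = (N : ENNReal) * ENNReal.ofReal δα := by
          rw [Finset.sum_const, hNdef, nsmul_eq_mul]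
      _ = ENNReal.ofReal ((N:ℝ) * δα) := by
          rw [ENNReal.ofReal_mul (Nat.cast_nonneg N), ENNReal.ofReal_natCast]
      _ < ENNReal.ofReal ε := by
          apply (ENNReal.ofReal_lt_ofReal_iff hε).mpr
          rw [hδαdef]
          have hN0 : (0:ℝ) ≤ (N:ℝ) := Nat.cast_nonneg N
          have h2N : (0:ℝ) < 2*((N:ℝ)+1) := by positivity
          rw [(mul_div_assoc _ _ _).symm, div_lt_iff₀ h2N]
          nlinarith
end
end

section
/- There exists a nonzero constant c ∈ ℂ such that for every z = (z₁,z₂) ∈ H, ∫_H B(z,ζ) · ζ̄₂ dV(ζ) = c / z₂, where B is the Bergman kernel of the Hartogs triangle. That is, the Bergman projection of the function ζ ↦ ζ̄₂ equals c/z₂. -/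
open MeasureTheory Complex ComplexConjugate

noncomputable section

/-- The Hartogs triangle `H = {(z₁,z₂) : |z₁| < |z₂| < 1}`. -/
def Hartogs : Set (ℂ × ℂ) := {z | ‖z.1‖ < ‖z.2‖ ∧ ‖z.2‖ < 1}

/-- The Bergman kernel of the Hartogs triangle. -/
def Bker (z ζ : ℂ × ℂ) : ℂ :=
  ((Real.pi : ℂ) ^ 2)⁻¹ * (z.2 * conj ζ.2)⁻¹ *
    ((1 - (z.1 * conj ζ.1) / (z.2 * conj ζ.2)) ^ 2)⁻¹ * ((1 - z.2 * conj ζ.2) ^ 2)⁻¹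

open Metric Set
open scoped Real

lemma angular (n : ℕ) :
    ∫ θ in (-π)..π, Complex.exp (-(n:ℂ) * Complex.I * θ) = if n = 0 then 2*π else 0 := by
  rcases Nat.eq_zero_or_pos n with h | h
  · simp [h, two_mul]
  · rw [if_neg h.ne']
    have hc : -(n:ℂ) * Complex.I ≠ 0 := by
      simp [Complex.I_ne_zero, Nat.cast_eq_zero, h.ne']
    rw [integral_exp_mul_complex hc]
    have key : ∀ m : ℤ, Complex.exp ((m : ℂ) * (↑π * Complex.I)) = (-1 : ℂ) ^ m := by
      intro m
      rw [Complex.exp_int_mul, Complex.exp_pi_mul_I]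
    have h1 : -(n:ℂ) * Complex.I * ↑π = ((-n : ℤ) : ℂ) * (↑π * Complex.I) := by push_cast; ring
    have h2 : -(n:ℂ) * Complex.I * ↑(-π) = ((n : ℤ) : ℂ) * (↑π * Complex.I) := by push_cast; ring
    rw [h1, h2, key, key, zpow_neg, zpow_natCast]
    have : ((-1 : ℂ) ^ n)⁻¹ = (-1 : ℂ) ^ n := by
      rcases Nat.even_or_odd n with he | ho
      · rw [he.neg_one_pow]; simp
      · rw [ho.neg_one_pow]; norm_num
    rw [this, sub_self, zero_div]; norm_num
lemma disc_monomial (k n : ℕ) (r : ℝ) (hr : 0 < r) :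
    ∫ w in ball (0:ℂ) r, w ^ k * (conj w) ^ (k + n)
      = if n = 0 then ((π * r ^ (2*k+2) / (k+1) : ℝ) : ℂ) else 0 := by
  set f : ℂ → ℂ := (ball (0:ℂ) r).indicator (fun w => w ^ k * (conj w) ^ (k + n)) with hf
  have h1 : ∫ w in ball (0:ℂ) r, w ^ k * (conj w) ^ (k + n) = ∫ w, f w := by
    rw [hf, integral_indicator measurableSet_ball]
  rw [h1, ← Complex.integral_comp_polarCoord_symm f]
  have h2 : ∀ p ∈ polarCoord.target, p.1 • f (Complex.polarCoord.symm p) =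
      (Ioo (0:ℝ) r ×ˢ Ioo (-π) π).indicator
        (fun p : ℝ × ℝ => ((p.1 : ℂ) ^ (2*k+n+1)) * Complex.exp (-(n:ℂ) * Complex.I * p.2)) p := by
    rintro ⟨ρ, θ⟩ hp
    rw [show polarCoord.target = Ioi (0:ℝ) ×ˢ Ioo (-π) π from rfl] at hp
    obtain ⟨hρ : ρ ∈ Ioi (0:ℝ), hθ⟩ := hp
    have hρ0 : (0:ℝ) < ρ := hρ
    have hsym : Complex.polarCoord.symm (ρ, θ) = (ρ : ℂ) * Complex.exp (θ * Complex.I) := by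
      rw [Complex.polarCoord_symm_apply, Complex.exp_mul_I]; push_cast; ring
    have habs : ‖(Complex.polarCoord.symm (ρ, θ))‖ = ρ := by
      rw [Complex.norm_polarCoord_symm]; exact abs_of_pos hρ0
    by_cases hmem : ρ < r
    · have hball : Complex.polarCoord.symm (ρ, θ) ∈ ball (0:ℂ) r := by
        rw [mem_ball_zero_iff, habs]; exact hmem
      have hpm : ((ρ, θ) : ℝ × ℝ) ∈ Ioo (0:ℝ) r ×ˢ Ioo (-π) π := ⟨⟨hρ0, hmem⟩, hθ⟩
      rw [hf, indicator_of_mem hball, indicator_of_mem hpm, hsym]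
      have hconj : conj ((ρ : ℂ) * Complex.exp (θ * Complex.I))
          = (ρ : ℂ) * Complex.exp (-(θ * Complex.I)) := by
        rw [map_mul, conj_ofReal, ← Complex.exp_conj]
        congr 1
        simp [Complex.conj_I]
      rw [hconj, mul_pow, mul_pow, ← Complex.exp_nat_mul, ← Complex.exp_nat_mul, real_smul]
      have he : Complex.exp ((k:ℂ) * (↑θ * Complex.I)) *
          Complex.exp (((k+n : ℕ):ℂ) * -(↑θ * Complex.I))
          = Complex.exp (-(n:ℂ) * Complex.I * ↑θ) := by
        rw [← Complex.exp_add]; congr 1; push_cast; ring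
      linear_combination ((ρ:ℂ))^(2*k+n+1) * he
    · have hball : Complex.polarCoord.symm (ρ, θ) ∉ ball (0:ℂ) r := by
        rw [mem_ball_zero_iff, habs]; exact hmem
      have hpm : ((ρ, θ) : ℝ × ℝ) ∉ Ioo (0:ℝ) r ×ˢ Ioo (-π) π := by
        intro hc; exact hmem hc.1.2
      rw [hf, indicator_of_notMem hball, indicator_of_notMem hpm, smul_zero]
  rw [setIntegral_congr_fun (by exact (measurableSet_Ioi).prod measurableSet_Ioo) h2]
  rw [setIntegral_indicator ((measurableSet_Ioo).prod measurableSet_Ioo)]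
  have hsub : polarCoord.target ∩ (Ioo (0:ℝ) r ×ˢ Ioo (-π) π) = Ioo (0:ℝ) r ×ˢ Ioo (-π) π := by
    rw [inter_eq_right]
    intro p hp
    exact ⟨Ioo_subset_Ioi_self hp.1, hp.2⟩
  rw [hsub, Measure.volume_eq_prod,
    setIntegral_prod_mul (fun a : ℝ => (a:ℂ)^(2*k+n+1))
      (fun θ : ℝ => Complex.exp (-(n:ℂ) * Complex.I * θ)) (Ioo (0:ℝ) r) (Ioo (-π) π)]
  have hρint : ∫ ρ in Ioo (0:ℝ) r, (ρ : ℂ) ^ (2*k+n+1)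
      = ((r ^ (2*k+n+2) / (2*k+n+2) : ℝ) : ℂ) := by
    have hc : ∀ ρ : ℝ, (ρ : ℂ) ^ (2*k+n+1) = ((ρ ^ (2*k+n+1) : ℝ) : ℂ) := by
      intro ρ; push_cast; ring
    simp_rw [hc]
    have hoo : ∫ x in Ioo (0:ℝ) r, ((x ^ (2*k+n+1) : ℝ) : ℂ)
        = ((∫ x in Ioo (0:ℝ) r, x ^ (2*k+n+1) : ℝ) : ℂ) := integral_ofReal
    rw [hoo]
    congr 1
    rw [← integral_Ioc_eq_integral_Ioo, ← intervalIntegral.integral_of_le hr.le,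
      integral_pow]
    push_cast
    ring
  have hθint : ∫ θ in Ioo (-π) π, Complex.exp (-(n:ℂ) * Complex.I * θ)
      = if n = 0 then 2*π else 0 := by
    rw [← integral_Ioc_eq_integral_Ioo,
      ← intervalIntegral.integral_of_le (by linarith [Real.pi_pos] : -π ≤ π)]
    exact angular n
  rw [hρint, hθint]
  rcases Nat.eq_zero_or_pos n with h | h
  · rw [if_pos h, if_pos h, h]
    have e1 : ((2:ℂ) + (k:ℂ) * 2) ≠ 0 := by
      have : (0:ℝ) < 2 + (k:ℝ) * 2 := by positivity
      intro hcon
      have := congrArg Complex.re hcon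
      push_cast at this
      simp at this
      linarith [ (Nat.cast_nonneg k : (0:ℝ) ≤ k) ]
    have e2 : ((1:ℂ) + (k:ℂ)) ≠ 0 := by
      intro hcon
      have := congrArg Complex.re hcon
      push_cast at this
      simp at this
      linarith [ (Nat.cast_nonneg k : (0:ℝ) ≤ k) ]
    push_cast
    have key : ((2:ℂ) + (k:ℂ)*2)⁻¹ * 2 = ((1:ℂ) + (k:ℂ))⁻¹ := by
      rw [show ((2:ℂ) + (k:ℂ)*2) = 2*(1+(k:ℂ)) by ring, mul_inv]
      field_simp
    ring_nf
    linear_combination (↑r^2 * (↑r:ℂ)^(k*2) * (↑π:ℂ)) * key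
  · rw [if_neg h.ne', if_neg h.ne', Complex.ofReal_zero, mul_zero]
lemma hasSum_inv_one_sub_sq {u : ℂ} (hu : ‖u‖ < 1) :
    HasSum (fun n : ℕ => ((n:ℂ)+1) * u ^ n) (((1 - u)^2)⁻¹) := by
  have h1 := hasSum_coe_mul_geometric_of_norm_lt_one hu
  have h2 := hasSum_geometric_of_norm_lt_one hu
  have h3 := h1.add h2
  have hne : (1 : ℂ) - u ≠ 0 := by
    intro hc
    have : u = 1 := by linear_combination -hc
    rw [this] at hu; simp at hu
  have : u / (1-u)^2 + (1-u)⁻¹ = ((1-u)^2)⁻¹ := by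
    field_simp
    ring
  rw [this] at h3
  have e : (fun n : ℕ => ((n:ℂ)+1) * u ^ n) = fun b : ℕ => (b:ℂ) * u ^ b + u ^ b := by
    funext n; ring
  rw [e]; exact h3
lemma disc_series (k : ℕ) (a : ℂ) (r : ℝ) (hr : 0 < r) (ha : ‖a‖ * r < 1) :
    ∫ w in ball (0:ℂ) r, (w^k * (conj w)^k) * ((1 - a * conj w)^2)⁻¹
      = ((π * r^(2*k+2) / (k+1) : ℝ) : ℂ) := by
  set F : ℕ → ℂ → ℂ := fun n w => ((n:ℂ)+1) * a^n * (w^k * (conj w)^(k+n)) with hF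
  have habsr : ‖a‖ * r < 1 := ha
  -- pointwise series representation on the ball
  have hpt : ∀ w ∈ ball (0:ℂ) r,
      (w^k * (conj w)^k) * ((1 - a * conj w)^2)⁻¹ = ∑' n, F n w := by
    intro w hw
    have hwr : ‖w‖ < r := by
      rw [mem_ball_zero_iff] at hw; exact hw
    have hu : ‖a * conj w‖ < 1 := by
      rw [norm_mul, Complex.norm_conj]
      calc ‖a‖ * ‖w‖ ≤ ‖a‖ * r := by
            exact mul_le_mul_of_nonneg_left hwr.le (norm_nonneg a)
        _ < 1 := ha
    have hs := (hasSum_inv_one_sub_sq hu).mul_left (w^k * (conj w)^k)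
    rw [← hs.tsum_eq]
    congr 1 with n
    rw [hF]
    simp only [mul_pow, pow_add]
    ring
  rw [setIntegral_congr_fun measurableSet_ball hpt]
  -- integrability of each term
  have hint : ∀ n : ℕ, IntegrableOn (F n) (ball (0:ℂ) r) := by
    intro n
    have hc : Continuous (F n) := by
      rw [hF]
      continuity
    exact ((hc.continuousOn).integrableOn_compact (isCompact_closedBall 0 r)).mono_set
      ball_subset_closedBall
  -- summability of the integrals of norms
  have hsum : Summable (fun n => ∫ w in ball (0:ℂ) r, ‖F n w‖) := by
    have hx : |‖a‖ * r| < 1 := by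
      rw [_root_.abs_of_nonneg (by positivity)]; exact ha
    have hs1 : Summable (fun n : ℕ => ((n:ℝ)+1) * (‖a‖ * r)^n) := by
      have := (summable_pow_mul_geometric_of_norm_lt_one 1 (by rwa [Real.norm_eq_abs]) :
        Summable fun n : ℕ => (n:ℝ)^1 * (‖a‖ * r)^n)
      simp only [pow_one] at this
      have h2 : Summable (fun n : ℕ => (‖a‖ * r)^n) :=
        summable_geometric_of_lt_one (by positivity) ha
      simpa [add_mul, one_mul] using this.add h2
    apply Summable.of_nonneg_of_le (fun n => integral_nonneg (fun w => norm_nonneg _))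
      (fun n => ?_) (hs1.mul_left ((volume (ball (0:ℂ) r)).toReal * r^(2*k)))
    have hb : ∀ w ∈ ball (0:ℂ) r, ‖F n w‖ ≤ r^(2*k) * (((n:ℝ)+1) * (‖a‖ * r)^n) := by
      intro w hw
      have hwr : ‖w‖ ≤ r := by
        rw [mem_ball_zero_iff] at hw; exact hw.le
      rw [hF]
      simp only [norm_mul, norm_pow, Complex.norm_conj]
      have h1 : ‖((n:ℂ)+1)‖ = (n:ℝ)+1 := by
        rw [show ((n:ℂ)+1) = (((n:ℝ)+1 : ℝ) : ℂ) by push_cast; ring, Complex.norm_real, Real.norm_eq_abs]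
        rw [_root_.abs_of_nonneg (by positivity)]
      rw [h1]
      calc ((n:ℝ)+1) * ‖a‖ ^ n * (‖w‖ ^ k * ‖w‖ ^ (k+n))
          ≤ ((n:ℝ)+1) * ‖a‖ ^ n * (r ^ k * r ^ (k+n)) := by
            apply mul_le_mul_of_nonneg_left _ (by positivity)
            apply mul_le_mul (pow_le_pow_left₀ (norm_nonneg w) hwr k)
              (pow_le_pow_left₀ (norm_nonneg w) hwr (k+n)) (by positivity) (by positivity)
        _ = r^(2*k) * (((n:ℝ)+1) * (‖a‖ * r)^n) := by
            rw [mul_pow, pow_add]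
            ring
    calc ∫ w in ball (0:ℂ) r, ‖F n w‖
        ≤ ∫ _w in ball (0:ℂ) r, r^(2*k) * (((n:ℝ)+1) * (‖a‖ * r)^n) := by
          apply setIntegral_mono_on ((hint n).norm) (integrableOn_const
            measure_ball_lt_top.ne) measurableSet_ball hb
      _ = (volume (ball (0:ℂ) r)).toReal * r^(2*k) * (((n:ℝ)+1) * (‖a‖ * r)^n) := by
          rw [setIntegral_const]
          rw [smul_eq_mul, measureReal_def]
          ring
  rw [← integral_tsum_of_summable_integral_norm hint hsum]
  have hterm : ∀ n : ℕ, ∫ w in ball (0:ℂ) r, F n w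
      = ((n:ℂ)+1) * a^n * (if n = 0 then ((π * r^(2*k+2) / (k+1) : ℝ) : ℂ) else 0) := by
    intro n
    rw [hF]
    simp only
    rw [integral_const_mul, disc_monomial k n r hr]
  simp_rw [hterm]
  rw [tsum_eq_single 0 (by intro n hn; rw [if_neg hn, mul_zero])]
  rw [if_pos rfl]
  simp
lemma inner_eval (z₁ z₂ w₂ : ℂ) (hz1 : ‖z₁‖ < ‖z₂‖)
    (hz2 : ‖z₂‖ < 1) :
    (∫ w₁ : ℂ, Hartogs.indicator (fun ζ => Bker (z₁, z₂) ζ * conj ζ.2) (w₁, w₂))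
      = (ball (0:ℂ) 1).indicator
          (fun w => (((π:ℝ) : ℂ))⁻¹ * z₂⁻¹ * (w * conj w * ((1 - z₂ * conj w)^2)⁻¹)) w₂ := by
  have hz2abs : 0 < ‖z₂‖ := lt_of_le_of_lt (norm_nonneg z₁) hz1
  have hz2ne : z₂ ≠ 0 := by
    intro h; rw [h, norm_zero] at hz2abs; exact lt_irrefl 0 hz2abs
  have hπne : ((π : ℝ) : ℂ) ≠ 0 := Complex.ofReal_ne_zero.mpr Real.pi_ne_zero
  by_cases h2 : ‖w₂‖ < 1
  · by_cases hw0 : w₂ = 0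
    · have hzero : ∀ w₁ : ℂ,
          Hartogs.indicator (fun ζ => Bker (z₁, z₂) ζ * conj ζ.2) (w₁, w₂) = 0 := by
        intro w₁
        apply indicator_of_notMem
        rintro ⟨hmem, -⟩
        rw [hw0, norm_zero] at hmem
        exact absurd hmem (not_lt.mpr (norm_nonneg w₁))
      simp only [hzero, integral_zero]
      rw [hw0, indicator_of_mem (by simp [mem_ball_zero_iff] : (0:ℂ) ∈ ball (0:ℂ) 1)]
      simp
    · have habsw2 : 0 < ‖w₂‖ := norm_pos_iff.mpr hw0
      have hcw2 : conj w₂ ≠ 0 := by rwa [ne_eq, map_eq_zero]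
      have hind : ∀ w₁ : ℂ,
          Hartogs.indicator (fun ζ => Bker (z₁, z₂) ζ * conj ζ.2) (w₁, w₂)
          = (ball (0:ℂ) (‖w₂‖)).indicator
              (fun u => Bker (z₁, z₂) (u, w₂) * conj w₂) w₁ := by
        intro w₁
        by_cases hmem : ‖w₁‖ < ‖w₂‖
        · rw [indicator_of_mem (show (w₁, w₂) ∈ Hartogs from ⟨hmem, h2⟩),
            indicator_of_mem (show w₁ ∈ ball (0:ℂ) (‖w₂‖) by
              rwa [mem_ball_zero_iff])]
        · rw [indicator_of_notMem (show (w₁, w₂) ∉ Hartogs from fun hc => hmem hc.1),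
            indicator_of_notMem (show w₁ ∉ ball (0:ℂ) (‖w₂‖) by
              rwa [mem_ball_zero_iff])]
      rw [integral_congr_ae (Filter.Eventually.of_forall hind),
        integral_indicator measurableSet_ball]
      have hfeq : ∀ w₁ : ℂ, Bker (z₁, z₂) (w₁, w₂) * conj w₂
          = (((π:ℝ):ℂ)^2)⁻¹ * z₂⁻¹ * ((1 - z₂ * conj w₂)^2)⁻¹ *
            ((w₁^0 * (conj w₁)^0) * ((1 - (z₁ / (z₂ * conj w₂)) * conj w₁)^2)⁻¹) := by
        intro w₁
        have e1 : z₁ * conj w₁ / (z₂ * conj w₂) = (z₁ / (z₂ * conj w₂)) * conj w₁ := by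
          ring
        rw [show Bker (z₁, z₂) (w₁, w₂) = ((Real.pi : ℂ) ^ 2)⁻¹ * (z₂ * conj w₂)⁻¹ *
          ((1 - (z₁ * conj w₁) / (z₂ * conj w₂)) ^ 2)⁻¹ * ((1 - z₂ * conj w₂) ^ 2)⁻¹ from rfl]
        rw [e1]
        have e2 : (z₂ * conj w₂)⁻¹ * conj w₂ = z₂⁻¹ := by
          rw [mul_inv, mul_assoc, inv_mul_cancel₀ hcw2, mul_one]
        calc ((Real.pi:ℂ)^2)⁻¹ * (z₂ * conj w₂)⁻¹ *
              ((1 - (z₁ / (z₂ * conj w₂)) * conj w₁) ^ 2)⁻¹ * ((1 - z₂ * conj w₂)^2)⁻¹ * conj w₂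
            = ((Real.pi:ℂ)^2)⁻¹ * ((z₂ * conj w₂)⁻¹ * conj w₂) *
              ((1 - z₂ * conj w₂)^2)⁻¹ * ((1 - (z₁ / (z₂ * conj w₂)) * conj w₁) ^ 2)⁻¹ := by
              ring
          _ = _ := by rw [e2]; simp only [pow_zero, one_mul]; try ring
      rw [integral_congr_ae (Filter.Eventually.of_forall
        (fun w₁ => by rw [hfeq w₁] : ∀ w₁ : ℂ, Bker (z₁, z₂) (w₁, w₂) * conj w₂
          = (((π:ℝ):ℂ)^2)⁻¹ * z₂⁻¹ * ((1 - z₂ * conj w₂)^2)⁻¹ *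
            ((w₁^0 * (conj w₁)^0) * ((1 - (z₁ / (z₂ * conj w₂)) * conj w₁)^2)⁻¹)))]
      rw [integral_const_mul]
      have hsmall : ‖(z₁ / (z₂ * conj w₂))‖ * ‖w₂‖ < 1 := by
        have heq : ‖(z₁ / (z₂ * conj w₂))‖ * ‖w₂‖
            = ‖z₁‖ / ‖z₂‖ := by
          rw [norm_div, norm_mul, Complex.norm_conj]
          field_simp
        rw [heq, div_lt_one hz2abs]
        exact hz1
      rw [disc_series 0 (z₁ / (z₂ * conj w₂)) (‖w₂‖) habsw2 hsmall]
      rw [indicator_of_mem (show w₂ ∈ ball (0:ℂ) 1 by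
        rwa [mem_ball_zero_iff])]
      have hval : ((π * (‖w₂‖)^(2*0+2) / ((0:ℕ)+1) : ℝ) : ℂ)
          = ((π:ℝ):ℂ) * (w₂ * conj w₂) := by
        push_cast
        rw [Complex.mul_conj, Complex.normSq_eq_norm_sq]
        push_cast
        ring
      rw [hval]
      have hππ : ((((π:ℝ):ℂ))^2)⁻¹ * ((π:ℝ):ℂ) = (((π:ℝ):ℂ))⁻¹ := by
        rw [sq, mul_inv, mul_assoc, inv_mul_cancel₀ hπne, mul_one]
      linear_combination (w₂ * conj w₂ * ((1 - z₂ * conj w₂)^2)⁻¹ * z₂⁻¹) * hππ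
  · have hzero : ∀ w₁ : ℂ,
        Hartogs.indicator (fun ζ => Bker (z₁, z₂) ζ * conj ζ.2) (w₁, w₂) = 0 := by
      intro w₁
      exact indicator_of_notMem (fun hc => h2 hc.2) _
    simp only [hzero, integral_zero]
    rw [indicator_of_notMem (show w₂ ∉ ball (0:ℂ) 1 by
      rwa [mem_ball_zero_iff])]

lemma hartogs_measurable : MeasurableSet Hartogs := by
  have : IsOpen Hartogs := by
    apply IsOpen.inter
    · exact isOpen_lt (continuous_norm.comp continuous_fst)
        (continuous_norm.comp continuous_snd)
    · exact isOpen_lt (continuous_norm.comp continuous_snd) continuous_const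
  exact this.measurableSet

/-- there is a nonzero constant `c` such that the Bergman projection of
`ζ ↦ ζ̄₂` on the Hartogs triangle equals `c / z₂`. -/
theorem bergman_projection_of_conj_z2 :
    ∃ c : ℂ, c ≠ 0 ∧ ∀ z ∈ Hartogs,
      (∫ ζ in Hartogs, Bker z ζ * conj ζ.2) = c / z.2 := by
  refine ⟨1/2, by norm_num, ?_⟩
  rintro ⟨z₁, z₂⟩ ⟨hz1, hz2⟩
  simp only at hz1 hz2
  have hz2abs : 0 < ‖z₂‖ := lt_of_le_of_lt (norm_nonneg z₁) hz1
  have hz2ne : z₂ ≠ 0 := by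
    intro h; rw [h, norm_zero] at hz2abs; exact lt_irrefl 0 hz2abs
  set f : ℂ × ℂ → ℂ := fun ζ => Bker (z₁, z₂) ζ * conj ζ.2 with hfdef
  have hπ : ‖((π : ℝ) : ℂ)‖ = π := by
    rw [Complex.norm_real, Real.norm_eq_abs]; exact _root_.abs_of_nonneg Real.pi_pos.le
  have hπne : ((π : ℝ) : ℂ) ≠ 0 := Complex.ofReal_ne_zero.mpr Real.pi_ne_zero
  set t : ℝ := ‖z₁‖ / ‖z₂‖ with htdef
  have ht : t < 1 := by rw [htdef, div_lt_one hz2abs]; exact hz1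
  have ht0 : 0 ≤ t := by positivity
  set C : ℝ := (π^2)⁻¹ * (‖z₂‖)⁻¹ * ((1 - t)^2)⁻¹
      * ((1 - ‖z₂‖)^2)⁻¹ with hC
  -- pointwise bound on Hartogs
  have hbound : ∀ ζ ∈ Hartogs, ‖f ζ‖ ≤ C := by
    rintro ⟨w₁, w₂⟩ ⟨hw1, hw2⟩
    simp only at hw1 hw2
    have habsw2 : 0 < ‖w₂‖ := lt_of_le_of_lt (norm_nonneg w₁) hw1
    have hw2ne : ‖w₂‖ ≠ 0 := habsw2.ne'
    rw [hfdef]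
    simp only [Bker, norm_mul, norm_inv, norm_pow, map_mul,
      Complex.norm_conj]
    have hq : ‖(1 - z₁ * conj w₁ / (z₂ * conj w₂))‖ ≥ 1 - t := by
      have habsq : ‖(z₁ * conj w₁ / (z₂ * conj w₂))‖ ≤ t := by
        rw [norm_div, norm_mul, norm_mul, Complex.norm_conj, Complex.norm_conj,
          ← div_mul_div_comm, htdef]
        apply mul_le_of_le_one_right (by positivity)
        rw [div_le_one habsw2]
        exact hw1.le
      have := norm_sub_norm_le (1 : ℂ) (z₁ * conj w₁ / (z₂ * conj w₂))
      simp only [norm_one] at this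
      linarith
    have hp : ‖(1 - z₂ * conj w₂)‖ ≥ 1 - ‖z₂‖ := by
      have habsp : ‖(z₂ * conj w₂)‖ ≤ ‖z₂‖ := by
        rw [norm_mul, Complex.norm_conj]
        exact mul_le_of_le_one_right (norm_nonneg z₂) hw2.le
      have := norm_sub_norm_le (1 : ℂ) (z₂ * conj w₂)
      simp only [norm_one] at this
      linarith
    have heq : (‖((π:ℝ):ℂ)‖ ^2)⁻¹ * (‖z₂‖ * ‖w₂‖)⁻¹ *
        (‖(1 - z₁ * conj w₁ / (z₂ * conj w₂))‖^2)⁻¹ *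
        (‖(1 - z₂ * conj w₂)‖^2)⁻¹ * ‖w₂‖
        = (π^2)⁻¹ * (‖z₂‖)⁻¹ *
          (‖(1 - z₁ * conj w₁ / (z₂ * conj w₂))‖^2)⁻¹ *
          (‖(1 - z₂ * conj w₂)‖^2)⁻¹ := by
      have hsb : (‖z₂‖ * ‖w₂‖)⁻¹ * ‖w₂‖
          = (‖z₂‖)⁻¹ := by
        rw [mul_inv, mul_assoc, inv_mul_cancel₀ hw2ne, mul_one]
      calc _ = (‖((π:ℝ):ℂ)‖ ^2)⁻¹ * ((‖z₂‖ * ‖w₂‖)⁻¹ *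
            ‖w₂‖) * ((‖(1 - z₁ * conj w₁ / (z₂ * conj w₂))‖^2)⁻¹ *
            (‖(1 - z₂ * conj w₂)‖^2)⁻¹) := by ring
        _ = _ := by rw [hsb, hπ]; ring
    rw [heq, hC]
    gcongr <;> first | (apply pow_pos; linarith) | positivity | linarith
  -- finite volume
  have hvol : volume Hartogs < ⊤ := by
    have hsub : Hartogs ⊆ (ball (0:ℂ) 1) ×ˢ (ball (0:ℂ) 1) := by
      rintro ⟨w₁, w₂⟩ ⟨hw1, hw2⟩
      simp only at hw1 hw2
      constructor <;> rw [mem_ball_zero_iff]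
      · exact hw1.trans hw2
      · exact hw2
    calc volume Hartogs ≤ volume ((ball (0:ℂ) 1) ×ˢ (ball (0:ℂ) 1)) := measure_mono hsub
      _ = volume (ball (0:ℂ) 1) * volume (ball (0:ℂ) 1) := by
          rw [Measure.volume_eq_prod, Measure.prod_prod]
      _ < ⊤ := by
          rw [Complex.volume_ball]
          have h1 : (ENNReal.ofReal 1 ^ 2 * NNReal.pi : ENNReal) < ⊤ :=
            ENNReal.mul_lt_top (ENNReal.pow_lt_top ENNReal.ofReal_lt_top) ENNReal.coe_lt_top
          exact ENNReal.mul_lt_top h1 h1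
  -- measurability
  have hfmeas : Measurable f := by
    have h1 : Measurable (fun w : ℂ => conj w) := Complex.continuous_conj.measurable
    have h2 : Measurable (fun ζ : ℂ × ℂ => conj ζ.1) := h1.comp measurable_fst
    have h3 : Measurable (fun ζ : ℂ × ℂ => conj ζ.2) := h1.comp measurable_snd
    rw [hfdef]
    unfold Bker
    exact (((((h3.const_mul z₂).inv.const_mul (((Real.pi : ℂ)^2)⁻¹)).mul
      ((((h2.const_mul z₁).div (h3.const_mul z₂)).const_sub 1).pow_const 2).inv).mul
      (((h3.const_mul z₂).const_sub 1).pow_const 2).inv).mul h3)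
  have hf_int : IntegrableOn f Hartogs := by
    apply Measure.integrableOn_of_bounded hvol.ne hfmeas.aestronglyMeasurable
    filter_upwards [ae_restrict_mem hartogs_measurable] with ζ hζ
    exact hbound ζ hζ
  have hInt : Integrable (Hartogs.indicator f) volume :=
    (integrable_indicator_iff hartogs_measurable).mpr hf_int
  -- Fubini
  rw [← integral_indicator hartogs_measurable]
  rw [Measure.volume_eq_prod] at hInt ⊢
  rw [integral_prod_symm _ hInt]
  have hinner : ∀ w₂ : ℂ, (∫ w₁ : ℂ, Hartogs.indicator f (w₁, w₂))
      = (ball (0:ℂ) 1).indicator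
          (fun w => (((π:ℝ) : ℂ))⁻¹ * z₂⁻¹ * (w * conj w * ((1 - z₂ * conj w)^2)⁻¹)) w₂ :=
    fun w₂ => inner_eval z₁ z₂ w₂ hz1 hz2
  simp_rw [hinner]
  rw [integral_indicator measurableSet_ball, integral_const_mul]
  have hball1 : ∫ w in ball (0:ℂ) 1, w * conj w * ((1 - z₂ * conj w)^2)⁻¹
      = ((π/2 : ℝ) : ℂ) := by
    have hd := disc_series 1 z₂ 1 one_pos (by rwa [mul_one])
    simp only [pow_one] at hd
    rw [hd]
    norm_num
  rw [hball1]
  push_cast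
  field_simp
end
end
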